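/- arXiv:2009.11649 — 6 statements merged into one kernel-verified Lean document; each statement's English description precedes it below -/
import Mathlib

section
/- (Theorem 1, prescribed-time distributed NE seeking.) Let c > 0 and T > 0, and let x : ℝ → (Fin N → X) satisfy, for every t ∈ [0, T), HasDerivAt x ((c + 1/(T − t)) • (−𝒜 (x t))) t (the closed-loop dynamics of the prescribed-time algorithm), with arbitrary initial condition x 0. Then x(t) converges to the consensus point ψ̃ at the Nash equilibrium in the prescribed time T: Tendsto x (𝓝[Set.Ico 0 T] T) (𝓝 ψ̃), i.e. every player's estimate of the full action profile converges to x* as t → T⁻. -/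
noncomputable section

open Filter

/-- `gradi J i x` is the gradient, at `x i`, of the map `y ↦ J i (Function.update x i y)`,
i.e. player `i`'s partial gradient of its own cost with respect to its own action. -/
def gradi {N : ℕ} {d : Fin N → ℕ}
    (J : ∀ _ : Fin N, (PiLp 2 fun i => EuclideanSpace ℝ (Fin (d i))) → ℝ)
    (i : Fin N) (x : PiLp 2 fun i => EuclideanSpace ℝ (Fin (d i))) :
    EuclideanSpace ℝ (Fin (d i)) :=
  gradient (fun y => J i (WithLp.toLp 2 (Function.update x i y))) (x i)

/-- The pseudo-gradient `F`. -/
def Fmap {N : ℕ} {d : Fin N → ℕ}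
    (J : ∀ _ : Fin N, (PiLp 2 fun i => EuclideanSpace ℝ (Fin (d i))) → ℝ)
    (x : PiLp 2 fun i => EuclideanSpace ℝ (Fin (d i))) :
    PiLp 2 fun i => EuclideanSpace ℝ (Fin (d i)) :=
  WithLp.toLp 2 (fun i => gradi J i x)

/-- The extended pseudo-gradient `F̃`. -/
def Ftil {N : ℕ} {d : Fin N → ℕ}
    (J : ∀ _ : Fin N, (PiLp 2 fun i => EuclideanSpace ℝ (Fin (d i))) → ℝ)
    (ψ : Fin N → PiLp 2 fun i => EuclideanSpace ℝ (Fin (d i))) :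
    PiLp 2 fun i => EuclideanSpace ℝ (Fin (d i)) :=
  WithLp.toLp 2 (fun i => gradi J i (ψ i))

/-- The augmented game map `𝒜`. -/
def Amap {N : ℕ} {d : Fin N → ℕ}
    (J : ∀ _ : Fin N, (PiLp 2 fun i => EuclideanSpace ℝ (Fin (d i))) → ℝ)
    (G : SimpleGraph (Fin N)) [DecidableRel G.Adj] (κ : ℝ)
    (ψ : PiLp 2 fun _ : Fin N => PiLp 2 fun i => EuclideanSpace ℝ (Fin (d i))) :
    PiLp 2 fun _ : Fin N => PiLp 2 fun i => EuclideanSpace ℝ (Fin (d i)) :=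
  WithLp.toLp 2 (fun i => (show PiLp 2 (fun i => EuclideanSpace ℝ (Fin (d i))) from
      WithLp.toLp 2 (Function.update (0 : PiLp 2 fun i => EuclideanSpace ℝ (Fin (d i))) i (Ftil J ψ i)))
    + κ • ∑ j, SimpleGraph.lapMatrix ℝ G i j • ψ j)

lemma le_of_sq_le_sq' {a b : ℝ} (ha : 0 ≤ a) (hb : 0 ≤ b) (h : a ^ 2 ≤ b ^ 2) : a ≤ b := by
  nlinarith

lemma pilp_apply_norm_le {α : Type*} [Fintype α] {E : α → Type*}
    [∀ i, NormedAddCommGroup (E i)] (v : PiLp 2 E) (i : α) : ‖v i‖ ≤ ‖v‖ := by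
  refine le_of_sq_le_sq' (norm_nonneg _) (norm_nonneg _) ?_
  rw [PiLp.norm_sq_eq_of_L2]
  exact Finset.single_le_sum (f := fun j => ‖v j‖ ^ 2) (fun j _ => by positivity)
    (Finset.mem_univ i)

lemma inner_update {N : ℕ} {d : Fin N → ℕ}
    (u : PiLp 2 fun i : Fin N => EuclideanSpace ℝ (Fin (d i))) (i : Fin N)
    (v : EuclideanSpace ℝ (Fin (d i))) :
    (inner ℝ u (show PiLp 2 (fun i : Fin N => EuclideanSpace ℝ (Fin (d i))) from
      WithLp.toLp 2 (Function.update (0 : PiLp 2 fun i : Fin N => EuclideanSpace ℝ (Fin (d i))) i v)) : ℝ)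
      = inner ℝ (u i) v := by
  rw [PiLp.inner_apply]
  rw [Finset.sum_eq_single i (fun j _ hj => by
      show (inner ℝ (u j) (Function.update (0 : PiLp 2 fun i : Fin N => EuclideanSpace ℝ (Fin (d i))) i v j) : ℝ) = 0
      rw [Function.update_of_ne hj]
      exact inner_zero_right _)
    (fun h => absurd (Finset.mem_univ i) h)]
  show (inner ℝ (u i) (Function.update (0 : PiLp 2 fun i : Fin N => EuclideanSpace ℝ (Fin (d i))) i v i) : ℝ) = _
  rw [Function.update_self]

set_option maxHeartbeats 1000000 in
lemma amap_mono {N : ℕ} (hN : 1 ≤ N) {d : Fin N → ℕ}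
    (J : ∀ _ : Fin N, (PiLp 2 fun i => EuclideanSpace ℝ (Fin (d i))) → ℝ)
    (G : SimpleGraph (Fin N)) [DecidableRel G.Adj]
    (ε ι lam₂ κ : ℝ) (hε : 0 < ε) (hι : 0 < ι) (hlam₂ : 0 < lam₂)
    (hmono : ∀ x y : PiLp 2 fun i => EuclideanSpace ℝ (Fin (d i)),
      (inner ℝ (x - y) (Fmap J x - Fmap J y) : ℝ) ≥ ε * ‖x - y‖ ^ 2)
    (hFLip : ∀ x y : PiLp 2 fun i => EuclideanSpace ℝ (Fin (d i)),
      ‖Fmap J x - Fmap J y‖ ≤ ι * ‖x - y‖)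
    (hFtilLip : ∀ ψ φ : PiLp 2 fun _ : Fin N => PiLp 2 fun i => EuclideanSpace ℝ (Fin (d i)),
      ‖Ftil J ψ - Ftil J φ‖ ≤ ι * ‖ψ - φ‖)
    (hlap : ∀ v : Fin N → PiLp 2 fun i => EuclideanSpace ℝ (Fin (d i)),
      ∑ i, v i = 0 →
      ∑ i, ∑ j, SimpleGraph.lapMatrix ℝ G i j * (inner ℝ (v i) (v j) : ℝ) ≥ lam₂ * ∑ i, ‖v i‖ ^ 2)
    (xstar : PiLp 2 fun i => EuclideanSpace ℝ (Fin (d i))) (hxstar : Fmap J xstar = 0)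
    (hκgain : κ > (ι ^ 2 / ε + ι) / lam₂) :
    ∃ μ : ℝ, 0 < μ ∧
      ∀ ψ : PiLp 2 fun _ : Fin N => PiLp 2 fun i => EuclideanSpace ℝ (Fin (d i)),
      μ * ‖ψ - (show PiLp 2 (fun _ : Fin N => PiLp 2 fun i => EuclideanSpace ℝ (Fin (d i))) from
          WithLp.toLp 2 (fun _ => xstar))‖ ^ 2
        ≤ (inner ℝ (ψ - (show PiLp 2 (fun _ : Fin N => PiLp 2 fun i =>
            EuclideanSpace ℝ (Fin (d i))) from WithLp.toLp 2 (fun _ => xstar))) (Amap J G κ ψ) : ℝ) := by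
  have hNR : (1 : ℝ) ≤ (N : ℝ) := by exact_mod_cast hN
  have hN0 : (N : ℝ) ≠ 0 := by linarith
  have hκl : ι ^ 2 / ε + ι < κ * lam₂ := (div_lt_iff₀ hlam₂).mp hκgain
  have hι2ε : 0 < ι ^ 2 / ε := by positivity
  set dd : ℝ := κ * lam₂ - ι with hdd
  have hddpos : 0 < dd := by rw [hdd]; linarith
  have hεdd : ι ^ 2 < ε * dd := by
    have h2 : ι ^ 2 = ε * (ι ^ 2 / ε) := by field_simp
    rw [h2, hdd]
    have : ι ^ 2 / ε < κ * lam₂ - ι := by linarith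
    exact mul_lt_mul_of_pos_left this hε
  have hκpos : 0 < κ := by
    have : 0 < (ι ^ 2 / ε + ι) / lam₂ := by positivity
    linarith
  have hSpos : 0 < ε + dd := by linarith
  set μ0 : ℝ := (ε * dd - ι ^ 2) / (ε + dd) with hμ0def
  have hμ0pos : 0 < μ0 := div_pos (by linarith) hSpos
  have hμ0S : μ0 * (ε + dd) = ε * dd - ι ^ 2 := div_mul_cancel₀ _ hSpos.ne'
  have hNpos : (0 : ℝ) < (N : ℝ) := by linarith
  refine ⟨μ0 / N, div_pos hμ0pos hNpos, ?_⟩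
  intro ψ
  set ψt : PiLp 2 (fun _ : Fin N => PiLp 2 fun i => EuclideanSpace ℝ (Fin (d i))) :=
    WithLp.toLp 2 (fun _ => xstar) with hψt
  set w := ψ - ψt with hw
  set wbar : PiLp 2 (fun i => EuclideanSpace ℝ (Fin (d i))) := (N : ℝ)⁻¹ • ∑ i, w i with hwbar
  set e : PiLp 2 (fun _ : Fin N => PiLp 2 fun i => EuclideanSpace ℝ (Fin (d i))) :=
    WithLp.toLp 2 (fun i => w i - wbar) with he
  have heapp : ∀ i, e i = w i - wbar := fun i => rfl
  have hwapp : ∀ j, w j = ψ j - xstar := by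
    intro j
    rw [hw, PiLp.sub_apply, hψt]
  have hwieq : ∀ i, w i = wbar + e i := by
    intro i; rw [heapp i]; abel
  have hesum : ∑ i, e i = (0 : PiLp 2 fun i => EuclideanSpace ℝ (Fin (d i))) := by
    have h1 : ∑ i, e i = (∑ i, w i) - (N : ℕ) • wbar := by
      simp [heapp, Finset.sum_sub_distrib]
    rw [h1, hwbar, ← Nat.cast_smul_eq_nsmul ℝ, smul_smul, mul_inv_cancel₀ hN0, one_smul, sub_self]
  have hrow : ∀ i, ∑ j, SimpleGraph.lapMatrix ℝ G i j = 0 := by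
    intro i
    have h := congrFun (G.lapMatrix_mulVec_const_eq_zero (R := ℝ)) i
    simpa [Matrix.mulVec, dotProduct] using h
  have hcol : ∀ j, ∑ i, SimpleGraph.lapMatrix ℝ G i j = 0 := by
    intro j
    calc ∑ i, SimpleGraph.lapMatrix ℝ G i j
        = ∑ i, SimpleGraph.lapMatrix ℝ G j i :=
          Finset.sum_congr rfl fun i _ => (G.isSymm_lapMatrix (R := ℝ)).apply j i
      _ = 0 := hrow j
  set xbar := xstar + wbar with hxbar
  set φb : PiLp 2 (fun _ : Fin N => PiLp 2 fun i => EuclideanSpace ℝ (Fin (d i))) :=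
    WithLp.toLp 2 (fun _ => xbar) with hφ
  have hφF : Ftil J φb = Fmap J xbar := rfl
  have hψφ : ψ - φb = e := by
    refine PiLp.ext fun i => ?_
    rw [PiLp.sub_apply, heapp i, hwapp i, hφ, hxbar]
    exact (sub_sub _ _ _).symm
  set what : PiLp 2 (fun i => EuclideanSpace ℝ (Fin (d i))) := WithLp.toLp 2 (fun i => w i i) with hwhat
  set ehat : PiLp 2 (fun i => EuclideanSpace ℝ (Fin (d i))) := WithLp.toLp 2 (fun i => e i i) with hehat
  have hwhat_eq : what = wbar + ehat := by
    refine PiLp.ext fun i => ?_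
    rw [PiLp.add_apply]
    show w i i = wbar i + e i i
    rw [hwieq i, PiLp.add_apply]
  have hehat_norm : ‖ehat‖ ≤ ‖e‖ := by
    refine le_of_sq_le_sq' (norm_nonneg _) (norm_nonneg _) ?_
    rw [PiLp.norm_sq_eq_of_L2, PiLp.norm_sq_eq_of_L2]
    refine Finset.sum_le_sum fun i _ => ?_
    have h1 : ‖ehat i‖ ≤ ‖e i‖ := pilp_apply_norm_le (e i) i
    exact pow_le_pow_left₀ (norm_nonneg _) h1 2
  -- splitting of the inner ℝ product
  set A : ℝ := inner ℝ what (Ftil J ψ) with hA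
  set C : ℝ := ∑ i, ∑ j, SimpleGraph.lapMatrix ℝ G i j * (inner ℝ (e i) (e j) : ℝ) with hC
  set C0 : ℝ := ∑ i, ∑ j, SimpleGraph.lapMatrix ℝ G i j * (inner ℝ (w i) (ψ j) : ℝ) with hC0
  have hsplit : (inner ℝ w (Amap J G κ ψ) : ℝ) = A + κ * C0 := by
    rw [PiLp.inner_apply]
    have hterm : ∀ i, (inner ℝ (w i) (Amap J G κ ψ i) : ℝ)
        = (inner ℝ (w i i) (Ftil J ψ i) : ℝ)
          + κ * ∑ j, SimpleGraph.lapMatrix ℝ G i j * (inner ℝ (w i) (ψ j) : ℝ) := by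
      intro i
      show (inner ℝ (w i) ((show PiLp 2 (fun i => EuclideanSpace ℝ (Fin (d i))) from
          WithLp.toLp 2 (Function.update (0 : PiLp 2 fun i => EuclideanSpace ℝ (Fin (d i))) i (Ftil J ψ i)))
        + κ • ∑ j, SimpleGraph.lapMatrix ℝ G i j • ψ j) : ℝ) = _
      rw [inner_add_right, inner_update, real_inner_smul_right, inner_sum]
      congr 2
      exact Finset.sum_congr rfl fun j _ => real_inner_smul_right _ _ _
    calc ∑ i, (inner ℝ (w i) (Amap J G κ ψ i) : ℝ)
        = ∑ i, ((inner ℝ (w i i) (Ftil J ψ i) : ℝ)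
            + κ * ∑ j, SimpleGraph.lapMatrix ℝ G i j * (inner ℝ (w i) (ψ j) : ℝ)) :=
          Finset.sum_congr rfl fun i _ => hterm i
      _ = (∑ i, (inner ℝ (w i i) (Ftil J ψ i) : ℝ)) + κ * C0 := by
          rw [Finset.sum_add_distrib, ← Finset.mul_sum, hC0]
      _ = A + κ * C0 := by rw [hA, PiLp.inner_apply]
  have hC0C : C0 = C := by
    have hip : ∀ i j, (inner ℝ (w i) (ψ j) : ℝ)
        = ((inner ℝ (w i) xstar : ℝ) + (inner ℝ wbar wbar : ℝ) + (inner ℝ (e i) wbar : ℝ))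
          + (inner ℝ wbar (e j) : ℝ) + (inner ℝ (e i) (e j) : ℝ) := by
      intro i j
      have h1 : ψ j = xstar + w j := by rw [hwapp j]; abel
      have h2 : (inner ℝ (w i) (w j) : ℝ)
          = (inner ℝ wbar wbar : ℝ) + (inner ℝ (e i) wbar : ℝ)
            + (inner ℝ wbar (e j) : ℝ) + (inner ℝ (e i) (e j) : ℝ) := by
        rw [hwieq i, hwieq j, inner_add_left, inner_add_right, inner_add_right]
        ring_nf
      rw [h1, inner_add_right, h2]
      ring
    have hinner1 : ∀ i, ∑ j, SimpleGraph.lapMatrix ℝ G i j * (inner ℝ (w i) (ψ j) : ℝ)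
        = (∑ j, SimpleGraph.lapMatrix ℝ G i j * (inner ℝ wbar (e j) : ℝ))
          + ∑ j, SimpleGraph.lapMatrix ℝ G i j * (inner ℝ (e i) (e j) : ℝ) := by
      intro i
      have hz : ∑ j, SimpleGraph.lapMatrix ℝ G i j
          * ((inner ℝ (w i) xstar : ℝ) + (inner ℝ wbar wbar : ℝ) + (inner ℝ (e i) wbar : ℝ)) = 0 := by
        rw [← Finset.sum_mul, hrow, zero_mul]
      calc ∑ j, SimpleGraph.lapMatrix ℝ G i j * (inner ℝ (w i) (ψ j) : ℝ)
          = ∑ j, (SimpleGraph.lapMatrix ℝ G i j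
              * ((inner ℝ (w i) xstar : ℝ) + (inner ℝ wbar wbar : ℝ) + (inner ℝ (e i) wbar : ℝ))
            + (SimpleGraph.lapMatrix ℝ G i j * (inner ℝ wbar (e j) : ℝ)
              + SimpleGraph.lapMatrix ℝ G i j * (inner ℝ (e i) (e j) : ℝ))) :=
            Finset.sum_congr rfl fun j _ => by rw [hip i j]; ring
        _ = _ := by
            rw [Finset.sum_add_distrib, hz, zero_add, Finset.sum_add_distrib]
    calc C0 = ∑ i, ((∑ j, SimpleGraph.lapMatrix ℝ G i j * (inner ℝ wbar (e j) : ℝ))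
          + ∑ j, SimpleGraph.lapMatrix ℝ G i j * (inner ℝ (e i) (e j) : ℝ)) := by
          rw [hC0]; exact Finset.sum_congr rfl fun i _ => hinner1 i
      _ = (∑ i, ∑ j, SimpleGraph.lapMatrix ℝ G i j * (inner ℝ wbar (e j) : ℝ)) + C := by
          rw [Finset.sum_add_distrib, hC]
      _ = C := by
          have hzz : ∑ i, ∑ j, SimpleGraph.lapMatrix ℝ G i j * (inner ℝ wbar (e j) : ℝ) = 0 := by
            rw [Finset.sum_comm]
            refine Finset.sum_eq_zero fun j _ => ?_
            rw [← Finset.sum_mul, hcol, zero_mul]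
          rw [hzz, zero_add]
  -- bound on A
  have hFtileq : Ftil J ψ = (Ftil J ψ - Ftil J φb) + (Fmap J xbar - Fmap J xstar)
      + Fmap J xstar := by
    rw [← hφF]; abel
  have hAeq : A = (inner ℝ what (Ftil J ψ - Ftil J φb) : ℝ)
      + (inner ℝ what (Fmap J xbar - Fmap J xstar) : ℝ) := by
    rw [hA]
    conv_lhs => rw [hFtileq]
    rw [inner_add_right, inner_add_right, hxstar, inner_zero_right, add_zero]
  have hb1 : (inner ℝ what (Ftil J ψ - Ftil J φb) : ℝ)
      ≥ -((‖wbar‖ + ‖e‖) * (ι * ‖e‖)) := by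
    have h1 : ‖Ftil J ψ - Ftil J φb‖ ≤ ι * ‖e‖ := by
      have h := hFtilLip ψ φb
      rwa [hψφ] at h
    have h2 : ‖what‖ ≤ ‖wbar‖ + ‖e‖ := by
      rw [hwhat_eq]
      exact (norm_add_le _ _).trans (by linarith [hehat_norm])
    have h3 := abs_real_inner_le_norm what (Ftil J ψ - Ftil J φb)
    have h4 : ‖what‖ * ‖Ftil J ψ - Ftil J φb‖ ≤ (‖wbar‖ + ‖e‖) * (ι * ‖e‖) :=
      mul_le_mul h2 h1 (norm_nonneg _) (by positivity)
    have h5 := neg_abs_le (inner ℝ what (Ftil J ψ - Ftil J φb) : ℝ)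
    linarith
  have hbar : xbar - xstar = wbar := by rw [hxbar]; abel
  have hb2 : (inner ℝ what (Fmap J xbar - Fmap J xstar) : ℝ)
      ≥ ε * ‖wbar‖ ^ 2 - ‖e‖ * (ι * ‖wbar‖) := by
    rw [hwhat_eq, inner_add_left]
    have hm := hmono xbar xstar
    rw [hbar] at hm
    have hL := hFLip xbar xstar
    rw [hbar] at hL
    have h3 := abs_real_inner_le_norm ehat (Fmap J xbar - Fmap J xstar)
    have h4 : ‖ehat‖ * ‖Fmap J xbar - Fmap J xstar‖ ≤ ‖e‖ * (ι * ‖wbar‖) :=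
      mul_le_mul hehat_norm hL (norm_nonneg _) (norm_nonneg _)
    have h5 := neg_abs_le (inner ℝ ehat (Fmap J xbar - Fmap J xstar) : ℝ)
    linarith
  -- norm decomposition
  have hwnorm : ‖w‖ ^ 2 = (N : ℝ) * ‖wbar‖ ^ 2 + ∑ i, ‖e i‖ ^ 2 := by
    rw [PiLp.norm_sq_eq_of_L2]
    have h1 : ∀ i : Fin N, ‖w i‖ ^ 2
        = ‖wbar‖ ^ 2 + 2 * (inner ℝ wbar (e i) : ℝ) + ‖e i‖ ^ 2 := by
      intro i; rw [hwieq i]; exact norm_add_sq_real wbar (e i)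
    rw [Finset.sum_congr rfl fun i _ => h1 i, Finset.sum_add_distrib, Finset.sum_add_distrib]
    have h2 : ∑ i : Fin N, 2 * (inner ℝ wbar (e i) : ℝ) = 0 := by
      rw [← Finset.mul_sum, ← inner_sum, hesum, inner_zero_right, mul_zero]
    rw [h2, add_zero, Finset.sum_const, Finset.card_univ, Fintype.card_fin, nsmul_eq_mul]
  have hq2 : ‖e‖ ^ 2 = ∑ i, ‖e i‖ ^ 2 := PiLp.norm_sq_eq_of_L2 _ e
  have hCge : C ≥ lam₂ * ∑ i, ‖e i‖ ^ 2 := hlap e hesum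
  set p := ‖wbar‖ with hp
  set q := ‖e‖ with hqd
  have hq0 : 0 ≤ ε * p ^ 2 - 2 * ι * p * q + dd * q ^ 2 - μ0 * (p ^ 2 + q ^ 2) := by
    have expand : (ε * p ^ 2 - 2 * ι * p * q + dd * q ^ 2 - μ0 * (p ^ 2 + q ^ 2)) * (ε + dd)
        = (ε * p - ι * q) ^ 2 + (ι * p - dd * q) ^ 2 := by
      linear_combination (-(p ^ 2 + q ^ 2)) * hμ0S
    have h6 : 0 ≤ (ε * p ^ 2 - 2 * ι * p * q + dd * q ^ 2 - μ0 * (p ^ 2 + q ^ 2)) * (ε + dd) := by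
      rw [expand]; positivity
    exact (mul_nonneg_iff_of_pos_right hSpos).mp h6
  have hAge : A ≥ ε * p ^ 2 - 2 * ι * p * q - ι * q ^ 2 := by
    rw [hAeq]
    have e1 : -((p + q) * (ι * q)) = -(ι * p * q) - ι * q ^ 2 := by ring
    have e2 : ε * p ^ 2 - q * (ι * p) = ε * p ^ 2 - ι * p * q := by ring
    linarith [hb1, hb2]
  have hCge2 : κ * C ≥ (dd + ι) * q ^ 2 := by
    have h1 : κ * C ≥ κ * (lam₂ * ∑ i, ‖e i‖ ^ 2) :=
      mul_le_mul_of_nonneg_left hCge hκpos.le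
    have h2 : κ * (lam₂ * ∑ i, ‖e i‖ ^ 2) = (dd + ι) * q ^ 2 := by
      rw [hq2, hdd]; ring
    linarith
  have hμN : μ0 / N * N = μ0 := div_mul_cancel₀ _ hN0
  have hμle : μ0 / N ≤ μ0 := div_le_self hμ0pos.le hNR
  have hwn2 : ‖w‖ ^ 2 = (N : ℝ) * p ^ 2 + q ^ 2 := by rw [hwnorm, hq2]
  calc μ0 / N * ‖w‖ ^ 2 = μ0 / N * ((N : ℝ) * p ^ 2 + q ^ 2) := by rw [hwn2]
    _ = μ0 * p ^ 2 + μ0 / N * q ^ 2 := by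
        rw [mul_add, ← mul_assoc, hμN]
    _ ≤ μ0 * p ^ 2 + μ0 * q ^ 2 := by
        have := mul_le_mul_of_nonneg_right hμle (sq_nonneg q)
        linarith
    _ = μ0 * (p ^ 2 + q ^ 2) := by ring
    _ ≤ ε * p ^ 2 - 2 * ι * p * q + dd * q ^ 2 := by linarith
    _ ≤ A + κ * C0 := by rw [hC0C]; linarith [hAge, hCge2]
    _ = (inner ℝ w (Amap J G κ ψ) : ℝ) := hsplit.symm


set_option maxHeartbeats 1000000 in
/-- **Theorem 1** (prescribed-time distributed NE seeking): under the closed-loop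
prescribed-time dynamics, all players' estimates converge to the consensus point at the
Nash equilibrium `x*` in the prescribed time `T`. -/
theorem prescribed_time_distributed_NE_seeking
    {N : ℕ} (hN : 1 ≤ N) {d : Fin N → ℕ}
    (J : ∀ _ : Fin N, (PiLp 2 fun i => EuclideanSpace ℝ (Fin (d i))) → ℝ)
    (hJ : ∀ i, Differentiable ℝ (J i))
    (G : SimpleGraph (Fin N)) [DecidableRel G.Adj] (hG : G.Connected)
    (ε ι lam₂ κ : ℝ) (hε : 0 < ε) (hι : 0 < ι) (hlam₂ : 0 < lam₂)
    (hmono : ∀ x y : PiLp 2 fun i => EuclideanSpace ℝ (Fin (d i)),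
      (inner ℝ (x - y) (Fmap J x - Fmap J y) : ℝ) ≥ ε * ‖x - y‖ ^ 2)
    (hFLip : ∀ x y : PiLp 2 fun i => EuclideanSpace ℝ (Fin (d i)),
      ‖Fmap J x - Fmap J y‖ ≤ ι * ‖x - y‖)
    (hFtilLip : ∀ ψ φ : PiLp 2 fun _ : Fin N => PiLp 2 fun i => EuclideanSpace ℝ (Fin (d i)),
      ‖Ftil J ψ - Ftil J φ‖ ≤ ι * ‖ψ - φ‖)
    (hlap : ∀ v : Fin N → PiLp 2 fun i => EuclideanSpace ℝ (Fin (d i)),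
      ∑ i, v i = 0 →
      ∑ i, ∑ j, SimpleGraph.lapMatrix ℝ G i j * (inner ℝ (v i) (v j) : ℝ) ≥ lam₂ * ∑ i, ‖v i‖ ^ 2)
    (xstar : PiLp 2 fun i => EuclideanSpace ℝ (Fin (d i))) (hxstar : Fmap J xstar = 0)
    (hκgain : κ > (ι ^ 2 / ε + ι) / lam₂)
    (c T : ℝ) (hc : 0 < c) (hT : 0 < T)
    (x : ℝ → PiLp 2 fun _ : Fin N => PiLp 2 fun i => EuclideanSpace ℝ (Fin (d i)))
    (hx : ∀ t ∈ Set.Ico (0 : ℝ) T,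
      HasDerivAt x ((c + 1 / (T - t)) • (-(Amap J G κ (x t)))) t) :
    Tendsto x (nhdsWithin T (Set.Ico 0 T))
      (nhds (show PiLp 2 (fun _ : Fin N => PiLp 2 fun i => EuclideanSpace ℝ (Fin (d i))) from
        WithLp.toLp 2 (fun _ => xstar))) := by
  obtain ⟨μ, hμpos, hμ⟩ := amap_mono hN J G ε ι lam₂ κ hε hι hlam₂ hmono hFLip hFtilLip hlap
    xstar hxstar hκgain
  set ψt : PiLp 2 (fun _ : Fin N => PiLp 2 fun i => EuclideanSpace ℝ (Fin (d i))) :=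
    WithLp.toLp 2 (fun _ => xstar) with hψt
  set V : ℝ → ℝ := fun t => (inner ℝ (x t - ψt) (x t - ψt) : ℝ) with hV
  set g : ℝ → ℝ := fun t => 2 * μ * (c * t + (Real.log T - Real.log (T - t))) with hg
  set h : ℝ → ℝ := fun t => V t * Real.exp (g t) with hh
  set l := nhdsWithin T (Set.Ico 0 T) with hl
  have hsub : ∀ t ∈ Set.Ico (0 : ℝ) T, 0 < T - t := fun t ht => sub_pos.mpr ht.2
  have hVnonneg : ∀ t, 0 ≤ V t := fun t => real_inner_self_nonneg
  have hVd : ∀ t ∈ Set.Ico (0 : ℝ) T, HasDerivAt V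
      (2 * ((c + 1 / (T - t)) * -(inner ℝ (x t - ψt) (Amap J G κ (x t)) : ℝ))) t := by
    intro t ht
    have h1 : HasDerivAt (fun τ => x τ - ψt) ((c + 1 / (T - t)) • (-(Amap J G κ (x t)))) t :=
      (hx t ht).sub_const ψt
    have h2 := h1.inner (𝕜 := ℝ) h1
    refine h2.congr_deriv ?_
    rw [real_inner_smul_right, real_inner_smul_left, inner_neg_right, inner_neg_left,
      real_inner_comm (Amap J G κ (x t)) (x t - ψt)]
    ring
  have hgd : ∀ t ∈ Set.Ico (0 : ℝ) T, HasDerivAt g (2 * μ * (c + 1 / (T - t))) t := by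
    intro t ht
    have h1 : HasDerivAt (fun τ : ℝ => T - τ) (-1) t := by
      simpa using (hasDerivAt_id t).const_sub T
    have h2 : HasDerivAt (fun τ => Real.log (T - τ)) (-1 / (T - t)) t :=
      h1.log (hsub t ht).ne'
    have h3 : HasDerivAt (fun τ : ℝ => c * τ) (c * 1) t := (hasDerivAt_id t).const_mul c
    have h4 : HasDerivAt (fun τ => Real.log T - Real.log (T - τ)) (0 - -1 / (T - t)) t :=
      (hasDerivAt_const t (Real.log T)).sub h2
    have h5 := (h3.add h4).const_mul (2 * μ)
    refine h5.congr_deriv ?_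
    ring
  have hhd : ∀ t ∈ Set.Ico (0 : ℝ) T, HasDerivAt h
      (2 * ((c + 1 / (T - t)) * -(inner ℝ (x t - ψt) (Amap J G κ (x t)) : ℝ)) * Real.exp (g t)
        + V t * (Real.exp (g t) * (2 * μ * (c + 1 / (T - t))))) t :=
    fun t ht => (hVd t ht).mul ((hgd t ht).exp)
  have hmono' : ∀ t ∈ Set.Ico (0 : ℝ) T,
      μ * V t ≤ (inner ℝ (x t - ψt) (Amap J G κ (x t)) : ℝ) := by
    intro t _
    have h1 := hμ (x t)
    have h2 : V t = ‖x t - ψt‖ ^ 2 := real_inner_self_eq_norm_sq _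
    rw [h2]
    exact h1
  have hDnonpos : ∀ t ∈ Set.Ioo (0 : ℝ) T,
      2 * ((c + 1 / (T - t)) * -(inner ℝ (x t - ψt) (Amap J G κ (x t)) : ℝ)) * Real.exp (g t)
        + V t * (Real.exp (g t) * (2 * μ * (c + 1 / (T - t)))) ≤ 0 := by
    intro t ht
    have ht' : t ∈ Set.Ico (0 : ℝ) T := ⟨ht.1.le, ht.2⟩
    have h1 := hmono' t ht'
    have h2 : 0 < c + 1 / (T - t) := add_pos hc (div_pos one_pos (hsub t ht'))
    have h3 := Real.exp_pos (g t)
    have hfac : 2 * ((c + 1 / (T - t)) * -(inner ℝ (x t - ψt) (Amap J G κ (x t)) : ℝ))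
          * Real.exp (g t)
        + V t * (Real.exp (g t) * (2 * μ * (c + 1 / (T - t))))
        = 2 * ((c + 1 / (T - t)) * Real.exp (g t))
          * (μ * V t - (inner ℝ (x t - ψt) (Amap J G κ (x t)) : ℝ)) := by ring
    rw [hfac]
    apply mul_nonpos_of_nonneg_of_nonpos
    · exact mul_nonneg (by norm_num) (mul_nonneg h2.le h3.le)
    · linarith
  have hcont : ContinuousOn h (Set.Ico 0 T) :=
    fun t ht => ((hhd t ht).continuousAt).continuousWithinAt
  have hanti : AntitoneOn h (Set.Ico 0 T) := by
    apply antitoneOn_of_deriv_nonpos (convex_Ico 0 T) hcont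
    · intro t ht
      rw [interior_Ico] at ht
      exact ((hhd t ⟨ht.1.le, ht.2⟩).differentiableAt).differentiableWithinAt
    · intro t ht
      rw [interior_Ico] at ht
      rw [(hhd t ⟨ht.1.le, ht.2⟩).deriv]
      exact hDnonpos t ht
  have h0mem : (0 : ℝ) ∈ Set.Ico (0 : ℝ) T := ⟨le_refl 0, hT⟩
  have hVle : ∀ t ∈ Set.Ico (0 : ℝ) T, V t ≤ h 0 * Real.exp (-(g t)) := by
    intro t ht
    have h1 : h t ≤ h 0 := hanti h0mem ht ht.1
    have h2 : V t * Real.exp (g t) ≤ h 0 := h1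
    have h3 := Real.exp_pos (g t)
    rw [Real.exp_neg, ← div_eq_mul_inv, le_div_iff₀ h3]
    exact h2
  have hTtend : Tendsto (fun t => T - t) l (nhdsWithin 0 (Set.Ioi 0)) := by
    rw [tendsto_nhdsWithin_iff]
    constructor
    · have h1 : Tendsto (fun t : ℝ => T - t) (nhds T) (nhds (T - T)) :=
        tendsto_const_nhds.sub tendsto_id
      rw [sub_self] at h1
      exact h1.mono_left nhdsWithin_le_nhds
    · filter_upwards [self_mem_nhdsWithin] with t ht
      exact sub_pos.mpr ht.2
  have hlogtend : Tendsto (fun t => Real.log (T - t)) l atBot :=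
    Real.tendsto_log_nhdsGT_zero.comp hTtend
  have hgtend : Tendsto g l atTop := by
    have h1 : Tendsto (fun t => -Real.log (T - t)) l atTop :=
      tendsto_neg_atBot_atTop.comp hlogtend
    have h2 : Tendsto (fun t => Real.log T + -Real.log (T - t)) l atTop :=
      tendsto_atTop_add_const_left l (Real.log T) h1
    have h3 : Tendsto (fun t : ℝ => c * t) l (nhds (c * T)) :=
      ((continuous_const.mul continuous_id).tendsto T).mono_left nhdsWithin_le_nhds
    have h4 : Tendsto (fun t => c * t + (Real.log T + -Real.log (T - t))) l atTop :=
      h3.add_atTop h2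
    have h5 : Tendsto (fun t => c * t + (Real.log T - Real.log (T - t))) l atTop := by
      refine h4.congr fun t => by ring
    have h6 := h5.const_mul_atTop (r := 2 * μ) (by linarith)
    exact h6.congr fun t => rfl
  have hexp : Tendsto (fun t => Real.exp (-(g t))) l (nhds 0) :=
    Real.tendsto_exp_atBot.comp (tendsto_neg_atTop_atBot.comp hgtend)
  have hub : Tendsto (fun t => h 0 * Real.exp (-(g t))) l (nhds 0) := by
    have := hexp.const_mul (h 0)
    simpa using this
  have hVtend : Tendsto V l (nhds 0) :=
    squeeze_zero' (Eventually.of_forall hVnonneg)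
      (by filter_upwards [self_mem_nhdsWithin] with t ht using hVle t ht) hub
  rw [tendsto_iff_norm_sub_tendsto_zero]
  have hnorm : ∀ t, ‖x t - ψt‖ = Real.sqrt (V t) := by
    intro t
    have h2 : V t = ‖x t - ψt‖ ^ 2 := real_inner_self_eq_norm_sq _
    rw [h2, Real.sqrt_sq (norm_nonneg _)]
  have hsq : Tendsto (fun t => Real.sqrt (V t)) l (nhds 0) := by
    have := (Real.continuous_sqrt.tendsto 0).comp hVtend
    simpa [Function.comp_def] using this
  exact hsq.congr fun t => (hnorm t).symm
end
end

section
/- (Theorem 3 of the paper, prescribed-time fully distributed NE seeking with adaptive gains over a fixed graph.) Let c > 0, T > 0, and let A denote the 0/1 adjacency matrix of the connected graph G. Let γ : Fin N → Fin N → ℝ be symmetric with γ i j > 0, and let x : ℝ → (Fin N → X) and κ : Fin N → Fin N → ℝ → ℝ satisfy, for every t ∈ [0, T): for each player i, HasDerivAt x ((c + 1/(T − t)) • (−(fun i => Function.update (0 : X) i ((F̃ (x t)) i) + ∑ j, (κ i j t * A i j) • (x t i − x t j)))) t, and for each pair i j, HasDerivAt (κ i j) ((c + 1/(T − t)) * (γ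 i j * A i j * ‖x t i − x t j‖²)) t, with symmetric nonnegative initial gains κ i j 0 = κ j i 0 ≥ 0. Then: (1) x(t) converges to ψ̃ in the prescribed time T, i.e. Tendsto x (𝓝[Set.Ico 0 T] T) (𝓝 ψ̃); and (2) each dynamic gain t ↦ κ i j t is monotone nondecreasing on [0, T) and converges to a finite limit as t → T⁻. -/
noncomputable section

open Filter

set_option maxHeartbeats 4000000

section NEhelpers
variable {ιt : Type*} [Fintype ιt] [DecidableEq ιt] {f : ιt → Type*}
  [∀ i, NormedAddCommGroup (f i)] [∀ i, InnerProductSpace ℝ (f i)]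

omit [DecidableEq ιt] in
lemma piLp_norm_sq (v : PiLp 2 f) : ‖v‖^2 = ∑ i, ‖v i‖^2 := by
  rw [← real_inner_self_eq_norm_sq v, PiLp.inner_apply]
  exact Finset.sum_congr rfl fun i _ => real_inner_self_eq_norm_sq (v i)

omit [DecidableEq ιt] in
lemma piLp_apply_norm_le (v : PiLp 2 f) (i : ιt) : ‖v i‖ ≤ ‖v‖ := by
  have h1 : ‖v i‖^2 ≤ ‖v‖^2 := by
    rw [piLp_norm_sq]
    exact Finset.single_le_sum (fun j _ => sq_nonneg ‖v j‖) (Finset.mem_univ i)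
  nlinarith [norm_nonneg (v i), norm_nonneg v]

lemma inner_update_s2 (u v : PiLp 2 f) (i : ιt) (w : f i)
    (hv : v = WithLp.toLp 2 (Function.update (0 : PiLp 2 f) i w)) :
    (inner ℝ u v : ℝ) = inner ℝ (u i) w := by
  rw [PiLp.inner_apply]
  rw [Finset.sum_eq_single i]
  · rw [hv]; simp
  · intro j _ hj
    have : v j = 0 := by
      rw [hv]; simp [Function.update_apply, hj]
    rw [this, inner_zero_right]
  · simp

lemma norm_update (v : PiLp 2 f) (i : ιt) (w : f i)
    (hv : v = WithLp.toLp 2 (Function.update (0 : PiLp 2 f) i w)) : ‖v‖ = ‖w‖ := by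
  have h : ‖v‖^2 = ‖w‖^2 := by
    rw [piLp_norm_sq v, Finset.sum_eq_single i]
    · rw [hv]; simp
    · intro j _ hj
      have : v j = 0 := by
        rw [hv]; simp [Function.update_apply, hj]
      simp [this]
    · simp
  nlinarith [norm_nonneg v, norm_nonneg w]

end NEhelpers

section NEhelpers2

lemma monoOn_of_hasDerivAt_Ico {a b : ℝ} {g g' : ℝ → ℝ}
    (hg : ∀ t ∈ Set.Ico a b, HasDerivAt g (g' t) t)
    (h0 : ∀ t ∈ Set.Ico a b, 0 ≤ g' t) : MonotoneOn g (Set.Ico a b) := by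
  apply monotoneOn_of_deriv_nonneg (convex_Ico a b)
  · exact fun t ht => (hg t ht).continuousAt.continuousWithinAt
  · rw [interior_Ico]
    exact fun t ht => ((hg t (Set.Ioo_subset_Ico_self ht)).differentiableAt).differentiableWithinAt
  · rw [interior_Ico]
    intro t ht
    rw [(hg t (Set.Ioo_subset_Ico_self ht)).deriv]
    exact h0 t (Set.Ioo_subset_Ico_self ht)

lemma antiOn_of_hasDerivAt_Ico {a b : ℝ} {g g' : ℝ → ℝ}
    (hg : ∀ t ∈ Set.Ico a b, HasDerivAt g (g' t) t)
    (h0 : ∀ t ∈ Set.Ico a b, g' t ≤ 0) : AntitoneOn g (Set.Ico a b) := by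
  apply antitoneOn_of_deriv_nonpos (convex_Ico a b)
  · exact fun t ht => (hg t ht).continuousAt.continuousWithinAt
  · rw [interior_Ico]
    exact fun t ht => ((hg t (Set.Ioo_subset_Ico_self ht)).differentiableAt).differentiableWithinAt
  · rw [interior_Ico]
    intro t ht
    rw [(hg t (Set.Ioo_subset_Ico_self ht)).deriv]
    exact h0 t (Set.Ioo_subset_Ico_self ht)

lemma antiOn_of_hasDerivAt_Icc {a b : ℝ} {g g' : ℝ → ℝ}
    (hg : ∀ t ∈ Set.Icc a b, HasDerivAt g (g' t) t)
    (h0 : ∀ t ∈ Set.Icc a b, g' t ≤ 0) : AntitoneOn g (Set.Icc a b) := by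
  apply antitoneOn_of_deriv_nonpos (convex_Icc a b)
  · exact fun t ht => (hg t ht).continuousAt.continuousWithinAt
  · exact fun t ht => ((hg t (interior_subset ht)).differentiableAt).differentiableWithinAt
  · intro t ht
    rw [(hg t (interior_subset ht)).deriv]
    exact h0 t (interior_subset ht)

variable {E : Type*} [NormedAddCommGroup E] [InnerProductSpace ℝ E]

lemma energy_hasDerivAt {f : ℝ → E} {v : E} {t : ℝ} (hf : HasDerivAt f v t) :
    HasDerivAt (fun u => (1/2)*‖f u‖^2) (inner ℝ (f t) v : ℝ) t := by
  have h1 := (HasDerivAt.inner ℝ hf hf).const_mul (1/2 : ℝ)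
  have h2 : (fun u => (1/2) * (inner ℝ (f u) (f u) : ℝ)) = fun u => (1/2)*‖f u‖^2 := by
    funext u
    rw [real_inner_self_eq_norm_sq]
  rw [h2] at h1
  rw [real_inner_comm (f t) v] at h1
  have h3 : (inner ℝ (f t) v : ℝ) = 1 / 2 * (inner ℝ (f t) v + inner ℝ (f t) v) := by ring
  rw [h3]; exact h1

lemma tendsto_of_monoOn_Ico {T : ℝ} (hT : 0 < T) {g : ℝ → ℝ}
    (hmono : MonotoneOn g (Set.Ico 0 T)) (Mb : ℝ) (hbdd : ∀ t ∈ Set.Ico 0 T, g t ≤ Mb) :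
    ∃ l : ℝ, Filter.Tendsto g (nhdsWithin T (Set.Ico 0 T)) (nhds l) := by
  have h0mem : (0:ℝ) ∈ Set.Ico 0 T := ⟨le_refl 0, hT⟩
  have hne : (g '' Set.Ico 0 T).Nonempty := ⟨g 0, Set.mem_image_of_mem g h0mem⟩
  have hba : BddAbove (g '' Set.Ico 0 T) := by
    refine ⟨Mb, ?_⟩
    rintro y ⟨t, ht, rfl⟩
    exact hbdd t ht
  set l := sSup (g '' Set.Ico 0 T) with hl
  refine ⟨l, ?_⟩
  rw [tendsto_order]
  constructor
  · intro b hb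
    obtain ⟨y, ⟨t₀, ht₀, rfl⟩, hy⟩ := exists_lt_of_lt_csSup hne hb
    have h1 : ∀ᶠ t in nhdsWithin T (Set.Ico 0 T), t₀ < t :=
      eventually_nhdsWithin_of_eventually_nhds (eventually_gt_nhds ht₀.2)
    have h2 : ∀ᶠ t in nhdsWithin T (Set.Ico 0 T), t ∈ Set.Ico 0 T :=
      eventually_mem_nhdsWithin
    filter_upwards [h1, h2] with t hlt hmem
    exact lt_of_lt_of_le hy (hmono ht₀ hmem hlt.le)
  · intro b hb
    have h2 : ∀ᶠ t in nhdsWithin T (Set.Ico 0 T), t ∈ Set.Ico 0 T :=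
      eventually_mem_nhdsWithin
    filter_upwards [h2] with t hmem
    exact lt_of_le_of_lt (le_csSup hba (Set.mem_image_of_mem g hmem)) hb

lemma tau_hasDerivAt {T c : ℝ} {t : ℝ} (ht : t < T) :
    HasDerivAt (fun u => c*u + (Real.log T - Real.log (T - u))) (c + 1/(T - t)) t := by
  have h1 : HasDerivAt (fun u : ℝ => c*u) c t := by
    simpa using (hasDerivAt_id t).const_mul c
  have h2 : HasDerivAt (fun u : ℝ => T - u) (-1) t := by
    simpa using (hasDerivAt_id t).const_sub T
  have h3 : HasDerivAt (fun u : ℝ => Real.log (T - u)) (-1/(T-t)) t := by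
    have := (Real.hasDerivAt_log (by linarith : T - t ≠ 0)).comp t h2
    simpa [div_eq_mul_inv, mul_comm, Function.comp_def] using this
  have h4 : HasDerivAt (fun u : ℝ => Real.log T - Real.log (T - u)) (1/(T-t)) t := by
    have h5 := (hasDerivAt_const t (Real.log T)).sub h3
    have h6 : (1:ℝ)/(T-t) = 0 - -1/(T-t) := by ring
    rw [h6]; exact h5
  exact h1.add h4

variable {ι2 : Type*} [Fintype ι2]

lemma sym_sum_inner (s : ι2 → ι2 → ℝ) (hs : ∀ i j, s i j = s j i) (v : ι2 → E) :
    ∑ i, ∑ j, s i j * (inner ℝ (v i) (v i - v j) : ℝ)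
      = (1/2) * ∑ i, ∑ j, s i j * ‖v i - v j‖^2 := by
  have key : ∀ i j, s i j * (inner ℝ (v i) (v i - v j) : ℝ) + s j i * (inner ℝ (v j) (v j - v i) : ℝ)
      = s i j * ‖v i - v j‖^2 := by
    intro i j
    have h1 : (inner ℝ (v i) (v i - v j) : ℝ) + (inner ℝ (v j) (v j - v i) : ℝ)
        = ‖v i - v j‖^2 := by
      rw [← real_inner_self_eq_norm_sq (v i - v j)]
      simp only [inner_sub_left, inner_sub_right]
      rw [real_inner_comm (v j) (v i)]
      ring
    rw [hs j i]
    linear_combination (s i j) * h1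
  have h2 : (2:ℝ) * (∑ i, ∑ j, s i j * (inner ℝ (v i) (v i - v j) : ℝ))
      = ∑ i, ∑ j, s i j * ‖v i - v j‖^2 := by
    have hswap : ∑ i, ∑ j, s i j * (inner ℝ (v i) (v i - v j) : ℝ)
        = ∑ i, ∑ j, s j i * (inner ℝ (v j) (v j - v i) : ℝ) := Finset.sum_comm
    calc (2:ℝ) * (∑ i, ∑ j, s i j * (inner ℝ (v i) (v i - v j) : ℝ))
        = ∑ i, ∑ j, (s i j * (inner ℝ (v i) (v i - v j) : ℝ)
            + s j i * (inner ℝ (v j) (v j - v i) : ℝ)) := by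
          rw [two_mul]
          nth_rewrite 2 [hswap]
          rw [← Finset.sum_add_distrib]
          exact Finset.sum_congr rfl fun i _ => (Finset.sum_add_distrib).symm
      _ = ∑ i, ∑ j, s i j * ‖v i - v j‖^2 := by
          exact Finset.sum_congr rfl fun i _ => Finset.sum_congr rfl fun j _ => key i j
  linarith [h2]

variable [FiniteDimensional ℝ E]

lemma lam2_exists {N : ℕ} (G : SimpleGraph (Fin N)) [DecidableRel G.Adj] (hG : G.Connected) :
    ∃ lam2 : ℝ, 0 < lam2 ∧ ∀ δ : PiLp 2 (fun _ : Fin N => E), (∑ i, δ i = 0) →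
      lam2 * ‖δ‖^2 ≤ ∑ i, ∑ j, (G.adjMatrix ℝ i j) * ‖δ i - δ j‖^2 := by
  classical
  set Y := PiLp 2 (fun _ : Fin N => E)
  set q : Y → ℝ := fun δ => ∑ i, ∑ j, (G.adjMatrix ℝ i j) * ‖δ i - δ j‖^2 with hq
  have hqnonneg : ∀ δ, 0 ≤ q δ := by
    intro δ
    apply Finset.sum_nonneg; intro i _
    apply Finset.sum_nonneg; intro j _
    have : (0:ℝ) ≤ G.adjMatrix ℝ i j := by simp [SimpleGraph.adjMatrix_apply]; positivity
    positivity
  have heval : ∀ i : Fin N, Continuous fun δ : Y => δ i := by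
    intro i
    exact (continuous_apply i).comp (PiLp.continuousLinearEquiv 2 ℝ (fun _ : Fin N => E)).continuous
  have hqcont : Continuous q := by
    apply continuous_finset_sum; intro i _
    apply continuous_finset_sum; intro j _
    exact continuous_const.mul (((heval i).sub (heval j)).norm.pow 2)
  have hqpos : ∀ δ : Y, (∑ i, δ i = 0) → δ ≠ 0 → 0 < q δ := by
    intro δ hsum hne
    rcases lt_or_eq_of_le (hqnonneg δ) with h | h
    · exact h
    exfalso
    have hterm : ∀ i j, (G.adjMatrix ℝ i j) * ‖δ i - δ j‖^2 = 0 := by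
      intro i j
      have h1 : ∀ i ∈ (Finset.univ : Finset (Fin N)),
          (0:ℝ) ≤ ∑ j, (G.adjMatrix ℝ i j) * ‖δ i - δ j‖^2 := by
        intro i _
        apply Finset.sum_nonneg; intro j _
        have : (0:ℝ) ≤ G.adjMatrix ℝ i j := by simp [SimpleGraph.adjMatrix_apply]; positivity
        positivity
      have h2 := (Finset.sum_eq_zero_iff_of_nonneg h1).mp h.symm i (Finset.mem_univ i)
      have h3 : ∀ j ∈ (Finset.univ : Finset (Fin N)),
          (0:ℝ) ≤ (G.adjMatrix ℝ i j) * ‖δ i - δ j‖^2 := by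
        intro j _
        have : (0:ℝ) ≤ G.adjMatrix ℝ i j := by simp [SimpleGraph.adjMatrix_apply]; positivity
        positivity
      exact (Finset.sum_eq_zero_iff_of_nonneg h3).mp h2 j (Finset.mem_univ j)
    have hadj : ∀ i j, G.Adj i j → δ i = δ j := by
      intro i j hij
      have := hterm i j
      rw [SimpleGraph.adjMatrix_apply] at this
      simp [hij] at this
      exact sub_eq_zero.mp (by simpa [norm_eq_zero] using this)
    have hall : ∀ i j : Fin N, δ i = δ j := by
      intro i j
      obtain ⟨w⟩ := hG.preconnected i j
      induction w with
      | nil => rfl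
      | cons h p ih => exact (hadj _ _ h).trans ih
    have hN : 0 < N := by
      have := hG.nonempty
      exact Fin.pos_iff_nonempty.mpr this
    have i0 : Fin N := ⟨0, hN⟩
    have hconst : ∑ i, δ i = (N : ℕ) • δ i0 := by
      rw [Finset.sum_congr rfl (fun i _ => hall i i0)]
      simp [Finset.card_univ]
    have hzero : δ i0 = 0 := by
      rw [hconst] at hsum
      have hN' : (N : ℝ) ≠ 0 := Nat.cast_ne_zero.mpr hN.ne'
      have : (N : ℝ) • δ i0 = 0 := by
        rw [← hsum]; simp [← Nat.cast_smul_eq_nsmul ℝ]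
      exact (smul_eq_zero.mp this).resolve_left hN'
    apply hne
    apply PiLp.ext; intro i
    rw [hall i i0, hzero]; rfl
  by_cases hS : ∃ δ : Y, (∑ i, δ i = 0) ∧ ‖δ‖ = 1
  · set S : Set Y := {δ | (∑ i, δ i = 0) ∧ ‖δ‖ = 1} with hSdef
    have hclosed : IsClosed S := by
      apply IsClosed.inter
      · exact isClosed_eq (continuous_finset_sum _ fun i _ => heval i) continuous_const
      · exact isClosed_eq continuous_norm continuous_const
    have hbdd : Bornology.IsBounded S := by
      apply Bornology.IsBounded.subset (Metric.isBounded_closedBall (x := (0:Y)) (r := 1))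
      intro δ hδ
      simp [Metric.mem_closedBall, dist_eq_norm, hδ.2]
    have hcompact : IsCompact S := Metric.isCompact_of_isClosed_isBounded hclosed hbdd
    obtain ⟨δ₀, hδ₀S, hmin2⟩ := hcompact.exists_isMinOn (Set.nonempty_def.mpr hS)
      hqcont.continuousOn
    have hmin : ∀ x ∈ S, q δ₀ ≤ q x := fun x hx => hmin2 hx
    have hδ₀ne : δ₀ ≠ 0 := by
      intro h
      have h2 := hδ₀S.2
      rw [h, norm_zero] at h2
      exact one_ne_zero h2.symm
    refine ⟨q δ₀, hqpos δ₀ hδ₀S.1 hδ₀ne, ?_⟩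
    intro δ hsum
    by_cases hδ : δ = 0
    · rw [hδ]; simp [hqnonneg]
    · have hr : 0 < ‖δ‖ := norm_pos_iff.mpr hδ
      set δ' : Y := ‖δ‖⁻¹ • δ with hδ'
      have hδ'S : δ' ∈ S := by
        constructor
        · have : ∑ i, δ' i = ‖δ‖⁻¹ • ∑ i, δ i := by
            rw [Finset.smul_sum]
            exact Finset.sum_congr rfl fun i _ => rfl
          rw [this, hsum, smul_zero]
        · rw [hδ', norm_smul]
          simp [abs_of_pos (inv_pos.mpr hr), inv_mul_cancel₀ hr.ne']
      have hq' : q δ' = ‖δ‖⁻¹^2 * q δ := by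
        rw [hq]
        simp only
        rw [Finset.mul_sum]
        apply Finset.sum_congr rfl; intro i _
        rw [Finset.mul_sum]
        apply Finset.sum_congr rfl; intro j _
        have h5 : δ' i - δ' j = ‖δ‖⁻¹ • (δ i - δ j) := by
          simp [hδ', PiLp.smul_apply, smul_sub]
        rw [h5, norm_smul, norm_inv, norm_norm, mul_pow]
        ring
      have := hmin δ' hδ'S
      rw [hq'] at this
      have h2 : q δ₀ * ‖δ‖^2 ≤ q δ := by
        have hpow : (0:ℝ) < ‖δ‖^2 := by positivity
        calc q δ₀ * ‖δ‖^2 ≤ (‖δ‖⁻¹^2 * q δ) * ‖δ‖^2 := by nlinarith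
          _ = q δ := by field_simp
      linarith
  · refine ⟨1, one_pos, ?_⟩
    intro δ hsum
    by_cases hδ : δ = 0
    · rw [hδ]; simp [hqnonneg]
    · exfalso
      apply hS
      have hr : 0 < ‖δ‖ := norm_pos_iff.mpr hδ
      refine ⟨‖δ‖⁻¹ • δ, ?_, ?_⟩
      · have : ∑ i, (‖δ‖⁻¹ • δ) i = ‖δ‖⁻¹ • ∑ i, δ i := by
          rw [Finset.smul_sum]
          exact Finset.sum_congr rfl fun i _ => rfl
        rw [this, hsum, smul_zero]
      · rw [norm_smul]
        simp [abs_of_pos (inv_pos.mpr hr), inv_mul_cancel₀ hr.ne']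

end NEhelpers2


section keybound

abbrev Xsp {N : ℕ} (d : Fin N → ℕ) := PiLp 2 fun i => EuclideanSpace ℝ (Fin (d i))
abbrev Ysp {N : ℕ} (d : Fin N → ℕ) := PiLp 2 (fun _ : Fin N => Xsp d)

lemma scalar_fin (ε ι a b sv : ℝ) (hε : 0 < ε) (hι : 0 < ι) (ha0 : 0 ≤ a) (hb0 : 0 ≤ b)
    (hsv0 : 0 ≤ sv) (hsb : sv ≤ b) :
    (ε/2)*a^2 + (ε/2)*b^2 ≤
      (ε*a^2 - (sv+a)*(ι*b) - sv*(ι*a)) + ((ε/2)*b^2 + ι*b^2 + (2*ι^2/ε)*b^2) := by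
  have hprods1 : sv*(ι*a) ≤ ι*a*b := by
    nlinarith [mul_nonneg (mul_nonneg hι.le ha0) (sub_nonneg.mpr hsb)]
  have hprods2 : (sv+a)*(ι*b) ≤ ι*b*b + ι*a*b := by
    nlinarith [mul_nonneg (mul_nonneg hι.le hb0) (sub_nonneg.mpr hsb)]
  have hkey : ε*((ε/2)*a^2 - 2*(ι*a*b) + (2*ι^2/ε)*b^2) = (1/2)*(ε*a - 2*ι*b)^2 := by
    field_simp
    ring
  nlinarith [sq_nonneg (ε*a - 2*ι*b), hkey, hε]

lemma key_bound {N : ℕ} (hN : 1 ≤ N) {d : Fin N → ℕ}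
    (J : ∀ _ : Fin N, (PiLp 2 fun i => EuclideanSpace ℝ (Fin (d i))) → ℝ)
    (ε ι : ℝ) (hε : 0 < ε) (hι : 0 < ι)
    (hmono : ∀ x y : PiLp 2 fun i => EuclideanSpace ℝ (Fin (d i)),
      (inner ℝ (x - y) (Fmap J x - Fmap J y) : ℝ) ≥ ε * ‖x - y‖ ^ 2)
    (hFLip : ∀ x y : PiLp 2 fun i => EuclideanSpace ℝ (Fin (d i)),
      ‖Fmap J x - Fmap J y‖ ≤ ι * ‖x - y‖)
    (hFtilLip : ∀ ψ φ : PiLp 2 fun _ : Fin N => PiLp 2 fun i => EuclideanSpace ℝ (Fin (d i)),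
      ‖Ftil J ψ - Ftil J φ‖ ≤ ι * ‖ψ - φ‖)
    (xstar : Xsp d) (hxstar : Fmap J xstar = 0)
    (G : SimpleGraph (Fin N)) [DecidableRel G.Adj]
    (lam2 : ℝ) (hlam2 : 0 < lam2)
    (hlam : ∀ δ : Ysp d, (∑ i, δ i = 0) →
      lam2 * ‖δ‖^2 ≤ ∑ i, ∑ j, (G.adjMatrix ℝ i j) * ‖δ i - δ j‖^2)
    (z : Ysp d) (ψt : Ysp d) (hψt : ∀ i, ψt i = xstar) (y : Xsp d) (hy : ∀ i, y i = z i i) :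
    (ε/(2*N)) * ‖z - ψt‖^2 ≤
      (inner ℝ (y - xstar) (Ftil J z) : ℝ)
      + (((ε + 2*ι + 4*ι^2/ε)/lam2)/2) * ∑ i, ∑ j, (G.adjMatrix ℝ i j) * ‖z i - z j‖^2 := by

  have hNR : (0:ℝ) < N := by exact_mod_cast Nat.lt_of_lt_of_le Nat.zero_lt_one hN
  have hN1 : (1:ℝ) ≤ N := by exact_mod_cast hN
  set xb : Xsp d := (N:ℝ)⁻¹ • ∑ j, z j with hxb
  set δ : Ysp d := WithLp.toLp 2 (fun i => z i - xb) with hδdef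
  have hδsum : ∑ i, δ i = 0 := by
    have h1 : ∑ i, δ i = (∑ i, z i) - (N:ℝ) • xb := by
      rw [Finset.sum_sub_distrib]
      congr 1
      rw [Finset.sum_const, Finset.card_univ, Fintype.card_fin]
      rw [← Nat.cast_smul_eq_nsmul ℝ]
    rw [h1, hxb, smul_smul, mul_inv_cancel₀ hNR.ne', one_smul, sub_self]
  set a := ‖xb - xstar‖ with ha
  set b := ‖δ‖ with hb
  set sv := ‖y - xb‖ with hsv
  have ha0 : 0 ≤ a := norm_nonneg _
  have hb0 : 0 ≤ b := norm_nonneg _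
  have hsv0 : 0 ≤ sv := norm_nonneg _
  -- sv ≤ b
  have hsb : sv ≤ b := by
    have h1 : sv^2 ≤ b^2 := by
      rw [hsv, hb, piLp_norm_sq (y - xb), piLp_norm_sq δ]
      apply Finset.sum_le_sum
      intro i _
      have h2 : (y - xb) i = (δ i) i := by
        show y i - xb i = (z i - xb) i
        rw [hy i]
        rfl
      rw [h2]
      have h3 := piLp_apply_norm_le (δ i) i
      nlinarith [norm_nonneg ((δ i) i), norm_nonneg (δ i)]
    nlinarith
  -- norm decomposition
  have hNa : ‖z - ψt‖^2 = N*a^2 + b^2 := by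
    rw [piLp_norm_sq (z - ψt)]
    have h1 : ∀ i, (z - ψt) i = (xb - xstar) + δ i := by
      intro i
      show z i - ψt i = (xb - xstar) + (z i - xb)
      rw [hψt i]
      abel
    have h2 : ∑ i, ‖(z - ψt) i‖^2
        = ∑ i, (a^2 + 2*(inner ℝ (xb - xstar) (δ i) : ℝ) + ‖δ i‖^2) := by
      apply Finset.sum_congr rfl
      intro i _
      rw [h1 i, norm_add_sq_real]
    rw [h2]
    rw [Finset.sum_add_distrib, Finset.sum_add_distrib]
    have h3 : ∑ i, 2*(inner ℝ (xb - xstar) (δ i) : ℝ) = 0 := by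
      rw [← Finset.mul_sum]
      have h4 : ∑ i, (inner ℝ (xb - xstar) (δ i) : ℝ) = inner ℝ (xb - xstar) (∑ i, δ i) :=
        (inner_sum _ _ _).symm
      rw [h4, hδsum, inner_zero_right, mul_zero]
    rw [h3]
    rw [Finset.sum_const, Finset.card_univ, Fintype.card_fin]
    have hb2 : ∑ i, ‖δ i‖^2 = b^2 := (piLp_norm_sq δ).symm
    rw [hb2, add_zero, ← Nat.cast_smul_eq_nsmul ℝ, smul_eq_mul]
  -- inner product expansion and bounds
  have hT1n : ‖Ftil J z - Fmap J xb‖ ≤ ι * b := by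
    exact hFtilLip z (WithLp.toLp 2 fun _ => xb)
  have hT2n : ‖Fmap J xb - Fmap J xstar‖ ≤ ι * a := hFLip xb xstar
  have hyx : ‖y - xstar‖ ≤ sv + a := by
    have h1 : y - xstar = (y - xb) + (xb - xstar) := by abel
    rw [h1]
    exact norm_add_le _ _
  have expand : (inner ℝ (y - xstar) (Ftil J z) : ℝ)
      = inner ℝ (y - xstar) (Ftil J z - Fmap J xb)
        + (inner ℝ (y - xb) (Fmap J xb - Fmap J xstar) : ℝ)
        + inner ℝ (xb - xstar) (Fmap J xb - Fmap J xstar) := by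
    rw [hxstar, sub_zero]
    simp only [inner_sub_left, inner_sub_right]
    ring
  have hT1 : (inner ℝ (y - xstar) (Ftil J z - Fmap J xb) : ℝ) ≥ -((sv+a)*(ι*b)) := by
    have h1 := abs_real_inner_le_norm (y - xstar) (Ftil J z - Fmap J xb)
    have h2 : ‖y - xstar‖ * ‖Ftil J z - Fmap J xb‖ ≤ (sv+a)*(ι*b) := by
      apply mul_le_mul hyx hT1n (norm_nonneg _) (by linarith)
    have h3 := abs_le.mp h1
    linarith [h3.1]
  have hT2 : (inner ℝ (y - xb) (Fmap J xb - Fmap J xstar) : ℝ) ≥ -(sv*(ι*a)) := by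
    have h1 := abs_real_inner_le_norm (y - xb) (Fmap J xb - Fmap J xstar)
    have h2 : ‖y - xb‖ * ‖Fmap J xb - Fmap J xstar‖ ≤ sv*(ι*a) := by
      apply mul_le_mul (le_refl sv) hT2n (norm_nonneg _) hsv0
    have h3 := abs_le.mp h1
    linarith [h3.1]
  have hT3 : (inner ℝ (xb - xstar) (Fmap J xb - Fmap J xstar) : ℝ) ≥ ε * a^2 := hmono xb xstar
  have hinner : (inner ℝ (y - xstar) (Ftil J z) : ℝ)
      ≥ ε*a^2 - (sv+a)*(ι*b) - sv*(ι*a) := by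
    rw [expand]
    linarith
  -- Laplacian-type bound
  have hdd : ∀ i j : Fin N, z i - z j = δ i - δ j := by
    intro i j
    show z i - z j = (z i - xb) - (z j - xb)
    abel
  have hlap : lam2 * b^2 ≤ ∑ i, ∑ j, (G.adjMatrix ℝ i j) * ‖z i - z j‖^2 := by
    have h1 := hlam δ hδsum
    have h2 : ∑ i, ∑ j, (G.adjMatrix ℝ i j) * ‖δ i - δ j‖^2
        = ∑ i, ∑ j, (G.adjMatrix ℝ i j) * ‖z i - z j‖^2 := by
      apply Finset.sum_congr rfl; intro i _
      apply Finset.sum_congr rfl; intro j _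
      rw [hdd i j]
    rw [h2] at h1
    exact h1
  set SS := ∑ i, ∑ j, (G.adjMatrix ℝ i j) * ‖z i - z j‖^2 with hSS
  set kb := (ε + 2*ι + 4*ι^2/ε)/lam2 with hkb
  have hkbpos : 0 < kb := by
    apply div_pos _ hlam2
    have : 0 < 4*ι^2/ε := by positivity
    linarith
  have hkblam : kb * lam2 = ε + 2*ι + 4*ι^2/ε := div_mul_cancel₀ _ hlam2.ne'
  have hSSb : (kb/2) * SS ≥ (kb/2) * (lam2 * b^2) := by
    apply mul_le_mul_of_nonneg_left hlap (by positivity)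
  -- final arithmetic
  rw [hNa]
  have hstep1 : (ε/(2*N)) * (N*a^2 + b^2) ≤ (ε/2)*a^2 + (ε/2)*b^2 := by
    have he1 : (ε/(2*N)) * (N*a^2 + b^2) = (ε/2)*a^2 + (ε/(2*N))*b^2 := by
      field_simp
    have he2 : ε/(2*N) ≤ ε/2 := by
      apply div_le_div_of_nonneg_left hε.le (by norm_num) (by linarith)
    nlinarith [sq_nonneg b]
  have hc2 : (kb/2) * (lam2*b^2) = (ε/2)*b^2 + ι*b^2 + (2*ι^2/ε)*b^2 := by
    have : kb/2 * (lam2*b^2) = (kb*lam2)/2 * b^2 := by ring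
    rw [this, hkblam]
    ring
  have hfin : (ε/2)*a^2 + (ε/2)*b^2 ≤
      (ε*a^2 - (sv+a)*(ι*b) - sv*(ι*a)) + (kb/2)*(lam2*b^2) := by
    rw [hc2]
    exact scalar_fin ε ι a b sv hε hι ha0 hb0 hsv0 hsb
  linarith [hinner, hSSb]

end keybound

/-- **Theorem 3** (prescribed-time fully distributed NE seeking with adaptive gains over a
fixed connected graph): all players' estimates converge to the consensus point at the Nash
equilibrium in the prescribed time `T`, and each dynamic gain `κ i j` is monotone
nondecreasing on `[0, T)` and converges to a finite limit as `t → T⁻`. -/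
theorem prescribed_time_fully_distributed_NE_seeking
    {N : ℕ} (hN : 1 ≤ N) {d : Fin N → ℕ}
    (J : ∀ _ : Fin N, (PiLp 2 fun i => EuclideanSpace ℝ (Fin (d i))) → ℝ)
    (hJ : ∀ i, Differentiable ℝ (J i))
    (ε ι : ℝ) (hε : 0 < ε) (hι : 0 < ι)
    (hmono : ∀ x y : PiLp 2 fun i => EuclideanSpace ℝ (Fin (d i)),
      (inner ℝ (x - y) (Fmap J x - Fmap J y) : ℝ) ≥ ε * ‖x - y‖ ^ 2)
    (hFLip : ∀ x y : PiLp 2 fun i => EuclideanSpace ℝ (Fin (d i)),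
      ‖Fmap J x - Fmap J y‖ ≤ ι * ‖x - y‖)
    (hFtilLip : ∀ ψ φ : PiLp 2 fun _ : Fin N => PiLp 2 fun i => EuclideanSpace ℝ (Fin (d i)),
      ‖Ftil J ψ - Ftil J φ‖ ≤ ι * ‖ψ - φ‖)
    (xstar : PiLp 2 fun i => EuclideanSpace ℝ (Fin (d i))) (hxstar : Fmap J xstar = 0)
    (G : SimpleGraph (Fin N)) [DecidableRel G.Adj] (hG : G.Connected)
    (c T : ℝ) (hc : 0 < c) (hT : 0 < T)
    (γ : Fin N → Fin N → ℝ) (hγsymm : ∀ i j, γ i j = γ j i) (hγpos : ∀ i j, 0 < γ i j)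
    (x : ℝ → PiLp 2 fun _ : Fin N => PiLp 2 fun i => EuclideanSpace ℝ (Fin (d i)))
    (κ : Fin N → Fin N → ℝ → ℝ)
    (hκ0symm : ∀ i j, κ i j 0 = κ j i 0) (hκ0nonneg : ∀ i j, 0 ≤ κ i j 0)
    (hx : ∀ t ∈ Set.Ico (0 : ℝ) T,
      HasDerivAt x ((c + 1 / (T - t)) •
        (-(show PiLp 2 (fun _ : Fin N => PiLp 2 fun i => EuclideanSpace ℝ (Fin (d i))) from
          WithLp.toLp 2 fun i =>
            (show PiLp 2 (fun i => EuclideanSpace ℝ (Fin (d i))) from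
              WithLp.toLp 2 (Function.update (0 : PiLp 2 fun i => EuclideanSpace ℝ (Fin (d i))) i
                (Ftil J (x t) i)))
            + ∑ j, (κ i j t * SimpleGraph.adjMatrix ℝ G i j) • (x t i - x t j)))) t)
    (hκ : ∀ i j, ∀ t ∈ Set.Ico (0 : ℝ) T,
      HasDerivAt (κ i j)
        ((c + 1 / (T - t)) * (γ i j * SimpleGraph.adjMatrix ℝ G i j * ‖x t i - x t j‖ ^ 2)) t) :
    Tendsto x (nhdsWithin T (Set.Ico 0 T))
      (nhds (show PiLp 2 (fun _ : Fin N => PiLp 2 fun i => EuclideanSpace ℝ (Fin (d i))) from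
        WithLp.toLp 2 fun _ => xstar)) ∧
    ∀ i j, MonotoneOn (κ i j) (Set.Ico 0 T) ∧
      ∃ l : ℝ, Tendsto (κ i j) (nhdsWithin T (Set.Ico 0 T)) (nhds l) := by
  classical
  have hT0 : (0:ℝ) ∈ Set.Ico (0:ℝ) T := ⟨le_refl 0, hT⟩
  have hNR : (0:ℝ) < N := by exact_mod_cast Nat.lt_of_lt_of_le Nat.zero_lt_one hN
  have hN1 : (1:ℝ) ≤ N := by exact_mod_cast hN
  have hμpos : ∀ t ∈ Set.Ico (0:ℝ) T, 0 < c + 1/(T - t) := by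
    intro t ht
    have h1 : 0 < T - t := by linarith [ht.2]
    have h2 : 0 < 1/(T-t) := by positivity
    linarith
  have hA0 : ∀ i j, (0:ℝ) ≤ G.adjMatrix ℝ i j := by
    intro i j
    by_cases h : G.Adj i j <;> simp [SimpleGraph.adjMatrix_apply, h]
  have hA1 : ∀ i j, G.adjMatrix ℝ i j ≤ 1 := by
    intro i j
    by_cases h : G.Adj i j <;> simp [SimpleGraph.adjMatrix_apply, h]
  have hAs : ∀ i j, G.adjMatrix ℝ i j = G.adjMatrix ℝ j i := by
    intro i j
    by_cases h : G.Adj i j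
    · simp [SimpleGraph.adjMatrix_apply, h, h.symm]
    · have h2 : ¬ G.Adj j i := fun hh => h hh.symm
      simp [SimpleGraph.adjMatrix_apply, h, h2]
  -- symmetry of gains
  have hκsym : ∀ i j, ∀ t ∈ Set.Ico (0:ℝ) T, κ i j t = κ j i t := by
    intro i j
    have hd : ∀ t ∈ Set.Ico (0:ℝ) T, HasDerivAt (fun u => κ i j u - κ j i u) ((fun _ => (0:ℝ)) t) t := by
      intro t ht
      have h1 := (hκ i j t ht).sub (hκ j i t ht)
      have h2 : (c + 1/(T - t)) * (γ i j * G.adjMatrix ℝ i j * ‖x t i - x t j‖^2)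
          - (c + 1/(T - t)) * (γ j i * G.adjMatrix ℝ j i * ‖x t j - x t i‖^2) = 0 := by
        rw [hγsymm i j, hAs i j, norm_sub_rev (x t i) (x t j)]
        ring
      rw [h2] at h1
      exact h1
    have hm := monoOn_of_hasDerivAt_Ico hd (fun _ _ => le_refl 0)
    have ha := antiOn_of_hasDerivAt_Ico hd (fun _ _ => le_refl 0)
    intro t ht
    have h1 := hm hT0 ht ht.1
    have h2 := ha hT0 ht ht.1
    have h0 : κ i j 0 - κ j i 0 = 0 := by rw [hκ0symm i j]; ring
    simp only at h1 h2
    linarith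
  -- monotonicity of gains
  have hκmono : ∀ i j, MonotoneOn (κ i j) (Set.Ico (0:ℝ) T) := by
    intro i j
    apply monoOn_of_hasDerivAt_Ico (g' := fun t => (c + 1/(T - t)) * (γ i j * G.adjMatrix ℝ i j * ‖x t i - x t j‖^2)) (hκ i j)
    intro t ht
    have := hμpos t ht
    have := hγpos i j
    have := hA0 i j
    positivity
  have hκnn : ∀ i j, ∀ t ∈ Set.Ico (0:ℝ) T, 0 ≤ κ i j t := by
    intro i j t ht
    exact le_trans (hκ0nonneg i j) (hκmono i j hT0 ht ht.1)
  -- algebraic connectivity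
  obtain ⟨lam2, hlam2, hlam⟩ := lam2_exists (E := Xsp d) G hG
  set kb : ℝ := (ε + 2*ι + 4*ι^2/ε)/lam2 with hkb
  have hkbpos : 0 < kb := by
    apply div_pos _ hlam2
    have : 0 < 4*ι^2/ε := by positivity
    linarith
  set ψt : Ysp d := WithLp.toLp 2 fun _ => xstar with hψtdef
  set w : ℝ → Ysp d := fun t =>
      (show Ysp d from WithLp.toLp 2 fun i =>
        (show Xsp d from WithLp.toLp 2 (Function.update (0 : Xsp d) i (Ftil J (x t) i)))
          + ∑ j, (κ i j t * G.adjMatrix ℝ i j) • (x t i - x t j)) with hwdef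
  have hx2 : ∀ t ∈ Set.Ico (0:ℝ) T, HasDerivAt x ((c + 1/(T - t)) • (-(w t))) t :=
    fun t ht => hx t ht
  set Pf : ℝ → ℝ := fun u => (1/2)*‖x u - ψt‖^2 with hPfdef
  set Qf : ℝ → ℝ := fun u => ∑ i, ∑ j, (κ i j u - kb)^2/(4*γ i j) with hQfdef
  set Vf : ℝ → ℝ := fun u => Pf u + Qf u with hVfdef
  set DP : ℝ → ℝ := fun t => (inner ℝ (x t - ψt) ((c + 1/(T - t)) • (-(w t))) : ℝ) with hDPdef
  set DV : ℝ → ℝ := fun t => DP t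
      + (∑ i, ∑ j, (κ i j t - kb) * (G.adjMatrix ℝ i j * ‖x t i - x t j‖^2))
        * ((c + 1/(T - t))/2) with hDVdef
  have hPd : ∀ t ∈ Set.Ico (0:ℝ) T, HasDerivAt Pf (DP t) t := by
    intro t ht
    exact energy_hasDerivAt ((hx2 t ht).sub_const ψt)
  have hVd : ∀ t ∈ Set.Ico (0:ℝ) T, HasDerivAt Vf (DV t) t := by
    intro t ht
    have hQ : HasDerivAt Qf
        ((∑ i, ∑ j, (κ i j t - kb) * (G.adjMatrix ℝ i j * ‖x t i - x t j‖^2))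
          * ((c + 1/(T - t))/2)) t := by
      have h1 : HasDerivAt Qf (∑ i, ∑ j,
          ((2:ℕ) * (κ i j t - kb)^(2-1)
            * ((c + 1/(T - t)) * (γ i j * G.adjMatrix ℝ i j * ‖x t i - x t j‖^2)))/(4*γ i j)) t := by
        apply HasDerivAt.fun_sum
        intro i _
        apply HasDerivAt.fun_sum
        intro j _
        exact (((hκ i j t ht).sub_const kb).pow 2).div_const (4*γ i j)
      convert h1 using 1
      rw [Finset.sum_mul]
      apply Finset.sum_congr rfl; intro i _
      rw [Finset.sum_mul]
      apply Finset.sum_congr rfl; intro j _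
      have hγ := (hγpos i j).ne'
      field_simp
      ring
    exact (hPd t ht).add hQ
  -- the key derivative bound
  have hDVle : ∀ t ∈ Set.Ico (0:ℝ) T,
      DV t ≤ -((c + 1/(T - t)) * ((ε/(2*N)) * ‖x t - ψt‖^2)) := by
    intro t ht
    have hμ := hμpos t ht
    set y : Xsp d := WithLp.toLp 2 fun i => x t i i with hydef
    have hee : ∀ i j : Fin N, x t i - x t j = (x t - ψt) i - (x t - ψt) j := by
      intro i j
      show x t i - x t j = (x t i - xstar) - (x t j - xstar)
      abel
    have hsymm : ∀ i j, κ i j t * G.adjMatrix ℝ i j = κ j i t * G.adjMatrix ℝ j i := by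
      intro i j
      rw [hκsym i j t ht, hAs i j]
    have ha1 : (inner ℝ (x t - ψt) (w t) : ℝ) = ∑ i, (inner ℝ ((x t - ψt) i) (w t i) : ℝ) :=
      PiLp.inner_apply _ _
    have ha2 : ∀ i, (inner ℝ ((x t - ψt) i) (w t i) : ℝ)
        = (inner ℝ (((x t - ψt) i) i) (Ftil J (x t) i) : ℝ)
          + ∑ j, (κ i j t * G.adjMatrix ℝ i j)
              * (inner ℝ ((x t - ψt) i) ((x t - ψt) i - (x t - ψt) j) : ℝ) := by
      intro i
      have hw : w t i = (show Xsp d from WithLp.toLp 2 (Function.update (0 : Xsp d) i (Ftil J (x t) i)))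
          + ∑ j, (κ i j t * G.adjMatrix ℝ i j) • (x t i - x t j) := rfl
      rw [hw, inner_add_right]
      congr 1
      · exact inner_update_s2 ((x t - ψt) i) _ i (Ftil J (x t) i) rfl
      · rw [inner_sum]
        apply Finset.sum_congr rfl
        intro j _
        rw [real_inner_smul_right, hee i j]
    have ha3 : ∑ i, (inner ℝ (((x t - ψt) i) i) (Ftil J (x t) i) : ℝ)
        = (inner ℝ (y - xstar) (Ftil J (x t)) : ℝ) := by
      rw [PiLp.inner_apply]
      apply Finset.sum_congr rfl
      intro i _
      rfl
    have ha4 : ∑ i, ∑ j, (κ i j t * G.adjMatrix ℝ i j)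
          * (inner ℝ ((x t - ψt) i) ((x t - ψt) i - (x t - ψt) j) : ℝ)
        = (1/2) * ∑ i, ∑ j, (κ i j t * G.adjMatrix ℝ i j) * ‖x t i - x t j‖^2 := by
      rw [sym_sum_inner (fun i j => κ i j t * G.adjMatrix ℝ i j) hsymm (fun i => (x t - ψt) i)]
      congr 1
      apply Finset.sum_congr rfl; intro i _
      apply Finset.sum_congr rfl; intro j _
      rw [← hee i j]
    have hIW : (inner ℝ (x t - ψt) (w t) : ℝ)
        = (inner ℝ (y - xstar) (Ftil J (x t)) : ℝ)
          + (1/2) * ∑ i, ∑ j, (κ i j t * G.adjMatrix ℝ i j) * ‖x t i - x t j‖^2 := by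
      rw [ha1, Finset.sum_congr rfl (fun i _ => ha2 i), Finset.sum_add_distrib, ha3, ha4]
    have hfirst : DP t = -((c + 1/(T - t)) * (inner ℝ (x t - ψt) (w t) : ℝ)) := by
      rw [hDPdef]
      simp only
      rw [real_inner_smul_right, inner_neg_right]
      ring
    have hSQ : (∑ i, ∑ j, (κ i j t - kb) * (G.adjMatrix ℝ i j * ‖x t i - x t j‖^2))
        = (∑ i, ∑ j, (κ i j t * G.adjMatrix ℝ i j) * ‖x t i - x t j‖^2)
          - kb * (∑ i, ∑ j, (G.adjMatrix ℝ i j) * ‖x t i - x t j‖^2) := by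
      rw [Finset.mul_sum, ← Finset.sum_sub_distrib]
      apply Finset.sum_congr rfl; intro i _
      rw [Finset.mul_sum, ← Finset.sum_sub_distrib]
      apply Finset.sum_congr rfl; intro j _
      ring
    have hDVeq : DV t = -((c + 1/(T - t)) * ((inner ℝ (y - xstar) (Ftil J (x t)) : ℝ)
        + (kb/2) * (∑ i, ∑ j, (G.adjMatrix ℝ i j) * ‖x t i - x t j‖^2))) := by
      rw [hDVdef]
      simp only
      rw [hfirst, hIW, hSQ]
      ring
    have hKB := key_bound hN J ε ι hε hι hmono hFLip hFtilLip xstar hxstar G lam2 hlam2 hlam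
      (x t) ψt (fun i => rfl) y (fun i => rfl)
    rw [← hkb] at hKB
    rw [hDVeq]
    apply neg_le_neg
    apply mul_le_mul_of_nonneg_left _ hμ.le
    exact hKB
  -- V is nonincreasing and nonnegative
  have hVanti : AntitoneOn Vf (Set.Ico (0:ℝ) T) := by
    apply antiOn_of_hasDerivAt_Ico hVd
    intro t ht
    have h1 := hDVle t ht
    have h2 : 0 ≤ (c + 1/(T - t)) * ((ε/(2*N)) * ‖x t - ψt‖^2) := by
      have := hμpos t ht
      positivity
    exact le_trans h1 (neg_nonpos.mpr h2)
  have hPnn : ∀ u, 0 ≤ Pf u := by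
    intro u
    rw [hPfdef]
    positivity
  have hQnn : ∀ u, 0 ≤ Qf u := by
    intro u
    rw [hQfdef]
    apply Finset.sum_nonneg; intro i _
    apply Finset.sum_nonneg; intro j _
    have := hγpos i j
    positivity
  have hVnn : ∀ u, 0 ≤ Vf u := by
    intro u
    rw [hVfdef]
    exact add_nonneg (hPnn u) (hQnn u)
  have hVle : ∀ t ∈ Set.Ico (0:ℝ) T, Vf t ≤ Vf 0 := fun t ht => hVanti hT0 ht ht.1
  -- gain bound
  set Γg : ℝ := ∑ i, ∑ j, γ i j with hΓg
  have hΓpos : ∀ i j, γ i j ≤ Γg := by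
    intro i j
    rw [hΓg]
    calc γ i j ≤ ∑ j', γ i j' := Finset.single_le_sum (fun j' _ => (hγpos i j').le) (Finset.mem_univ j)
      _ ≤ ∑ i', ∑ j', γ i' j' := Finset.single_le_sum
          (fun i' _ => Finset.sum_nonneg (fun j' _ => (hγpos i' j').le)) (Finset.mem_univ i)
  set κmax : ℝ := kb + Real.sqrt (4*Γg*(Vf 0)) with hκmax
  have hκmax0 : 0 ≤ κmax := by
    rw [hκmax]
    have := Real.sqrt_nonneg (4*Γg*(Vf 0))
    linarith
  have hκub : ∀ i j, ∀ t ∈ Set.Ico (0:ℝ) T, κ i j t ≤ κmax := by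
    intro i j t ht
    have h1 : (κ i j t - kb)^2/(4*γ i j) ≤ Qf t := by
      rw [hQfdef]
      calc (κ i j t - kb)^2/(4*γ i j)
          ≤ ∑ j', (κ i j' t - kb)^2/(4*γ i j') := Finset.single_le_sum
            (f := fun j' => (κ i j' t - kb)^2/(4*γ i j'))
            (fun j' _ => by have := hγpos i j'; positivity) (Finset.mem_univ j)
        _ ≤ ∑ i', ∑ j', (κ i' j' t - kb)^2/(4*γ i' j') := Finset.single_le_sum
            (f := fun i' => ∑ j', (κ i' j' t - kb)^2/(4*γ i' j'))
            (fun i' _ => Finset.sum_nonneg (fun j' _ => by have := hγpos i' j'; positivity))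
            (Finset.mem_univ i)
    have h2 : Qf t ≤ Vf t := by
      have := hPnn t
      rw [hVfdef]
      simp only
      linarith
    have h3 : (κ i j t - kb)^2 ≤ 4*Γg*(Vf 0) := by
      have hγ := hγpos i j
      have h4 : (κ i j t - kb)^2/(4*γ i j) ≤ Vf 0 := le_trans h1 (le_trans h2 (hVle t ht))
      have h5 : (κ i j t - kb)^2 ≤ 4*γ i j*(Vf 0) := by
        rw [div_le_iff₀ (by positivity)] at h4
        linarith [h4]
      have h6 : 4*γ i j*(Vf 0) ≤ 4*Γg*(Vf 0) := by
        have := hVnn 0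
        nlinarith [hΓpos i j]
      linarith
    have h7 : κ i j t - kb ≤ Real.sqrt (4*Γg*(Vf 0)) := by
      have h8 := Real.sqrt_le_sqrt h3
      rw [Real.sqrt_sq_eq_abs] at h8
      exact le_trans (le_abs_self _) h8
    rw [hκmax]
    linarith
  -- conclusion part 2
  refine ⟨?_, fun i j => ⟨hκmono i j, tendsto_of_monoOn_Ico hT (hκmono i j) κmax
    (fun t ht => hκub i j t ht)⟩⟩
  -- part 1 : prescribed-time convergence
  -- bounds on trajectory and vector field
  set M : ℝ := Real.sqrt (2*(Vf 0)) with hM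
  have hM0 : 0 ≤ M := Real.sqrt_nonneg _
  have heb : ∀ t ∈ Set.Ico (0:ℝ) T, ‖x t - ψt‖ ≤ M := by
    intro t ht
    have h2 : Pf t ≤ Vf t := by
      rw [hVfdef]; simp only; linarith [hQnn t]
    have h3 : Pf t ≤ Vf 0 := le_trans h2 (hVle t ht)
    have h4 : 2 * Pf t ≤ 2 * Vf 0 := by linarith
    have h5 : ‖x t - ψt‖ = Real.sqrt (2 * Pf t) := by
      simp only [hPfdef]
      rw [show (2:ℝ)*(1/2*‖x t - ψt‖^2) = ‖x t - ψt‖^2 by ring, Real.sqrt_sq (norm_nonneg _)]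
    rw [h5, hM]
    exact Real.sqrt_le_sqrt h4
  set CC : ℝ := ι*M + N*(κmax*(2*M)*N) with hCC
  have hCC0 : 0 ≤ CC := by
    rw [hCC]
    have h1 : 0 ≤ ι*M := mul_nonneg hι.le hM0
    have h2 : 0 ≤ (N:ℝ)*(κmax*(2*M)*N) :=
      mul_nonneg hNR.le (mul_nonneg (mul_nonneg hκmax0 (by linarith)) hNR.le)
    linarith
  have hwb : ∀ t ∈ Set.Ico (0:ℝ) T, ‖w t‖ ≤ CC := by
    intro t ht
    set u2 : Ysp d := (show Ysp d from WithLp.toLp 2 fun i =>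
      (show Xsp d from WithLp.toLp 2 (Function.update (0 : Xsp d) i (Ftil J (x t) i)))) with hu2
    set g2 : Ysp d := (show Ysp d from WithLp.toLp 2 fun i =>
      ∑ j, (κ i j t * G.adjMatrix ℝ i j) • (x t i - x t j)) with hg2
    have hw : w t = u2 + g2 := rfl
    have hu2n : ‖u2‖ = ‖Ftil J (x t)‖ := by
      have h1 : ‖u2‖^2 = ‖Ftil J (x t)‖^2 := by
        rw [piLp_norm_sq u2, piLp_norm_sq (Ftil J (x t))]
        apply Finset.sum_congr rfl
        intro i _
        rw [norm_update (u2 i) i (Ftil J (x t) i) rfl]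
      nlinarith [norm_nonneg u2, norm_nonneg (Ftil J (x t))]
    have hFt0 : Ftil J ψt = 0 := by
      apply PiLp.ext; intro i
      exact congrArg (fun v : Xsp d => v i) hxstar
    have hu2b : ‖u2‖ ≤ ι*M := by
      rw [hu2n]
      have h1 := hFtilLip (x t) ψt
      rw [hFt0, sub_zero] at h1
      exact le_trans h1 (mul_le_mul_of_nonneg_left (heb t ht) hι.le)
    have hg2b : ‖g2‖ ≤ N*(κmax*(2*M)*N) := by
      have hgi : ∀ i, ‖g2 i‖ ≤ κmax*(2*M)*N := by
        intro i
        have h1 : ‖g2 i‖ ≤ ∑ j, ‖(κ i j t * G.adjMatrix ℝ i j) • (x t i - x t j)‖ :=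
          (norm_sum_le _ _ : ‖∑ j, (κ i j t * G.adjMatrix ℝ i j) • (x t i - x t j)‖ ≤ _)
        have h2 : ∀ j, ‖(κ i j t * G.adjMatrix ℝ i j) • (x t i - x t j)‖ ≤ κmax*(2*M) := by
          intro j
          rw [norm_smul]
          have h3 : ‖x t i - x t j‖ ≤ 2*M := by
            have hi1 := piLp_apply_norm_le (x t - ψt) i
            have hi2 := piLp_apply_norm_le (x t - ψt) j
            have hi3 := heb t ht
            have hi4 : x t i - x t j = (x t - ψt) i - (x t - ψt) j := by
              show x t i - x t j = (x t i - xstar) - (x t j - xstar)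
              abel
            rw [hi4]
            calc ‖(x t - ψt) i - (x t - ψt) j‖
                ≤ ‖(x t - ψt) i‖ + ‖(x t - ψt) j‖ := norm_sub_le _ _
              _ ≤ 2*M := by linarith
          have h5 : ‖κ i j t * G.adjMatrix ℝ i j‖ ≤ κmax := by
            rw [Real.norm_eq_abs, abs_of_nonneg (mul_nonneg (hκnn i j t ht) (hA0 i j))]
            calc κ i j t * G.adjMatrix ℝ i j ≤ κ i j t * 1 := by
                  have := hκnn i j t ht
                  nlinarith [hA1 i j]
              _ = κ i j t := mul_one _
              _ ≤ κmax := hκub i j t ht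
          exact mul_le_mul h5 h3 (norm_nonneg _) hκmax0
        calc ‖g2 i‖ ≤ ∑ j, ‖(κ i j t * G.adjMatrix ℝ i j) • (x t i - x t j)‖ := h1
          _ ≤ ∑ _j : Fin N, κmax*(2*M) := Finset.sum_le_sum (fun j _ => h2 j)
          _ = κmax*(2*M)*N := by
              rw [Finset.sum_const, Finset.card_univ, Fintype.card_fin, nsmul_eq_mul]
              ring
      have h6 : ‖g2‖^2 ≤ ((N:ℝ)*(κmax*(2*M)*N))^2 := by
        rw [piLp_norm_sq g2]
        have h7 : ∀ i ∈ (Finset.univ : Finset (Fin N)), ‖g2 i‖^2 ≤ (κmax*(2*M)*N)^2 := by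
          intro i _
          have := hgi i
          nlinarith [norm_nonneg (g2 i)]
        calc ∑ i, ‖g2 i‖^2 ≤ ∑ _i : Fin N, (κmax*(2*M)*N)^2 := Finset.sum_le_sum h7
          _ = (N:ℝ)*(κmax*(2*M)*N)^2 := by
              rw [Finset.sum_const, Finset.card_univ, Fintype.card_fin, nsmul_eq_mul]
          _ ≤ ((N:ℝ)*(κmax*(2*M)*N))^2 := by
              nlinarith [sq_nonneg (κmax*(2*M)*N), hN1]
      have h8 : 0 ≤ (N:ℝ)*(κmax*(2*M)*N) :=
        mul_nonneg hNR.le (mul_nonneg (mul_nonneg hκmax0 (by linarith)) hNR.le)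
      nlinarith [norm_nonneg g2]
    calc ‖w t‖ = ‖u2 + g2‖ := by rw [hw]
      _ ≤ ‖u2‖ + ‖g2‖ := norm_add_le _ _
      _ ≤ CC := by rw [hCC]; linarith
  set K : ℝ := M*CC + 1 with hK
  have hK0 : 0 < K := by
    rw [hK]
    nlinarith [mul_nonneg hM0 hCC0]
  have hDPb : ∀ t ∈ Set.Ico (0:ℝ) T, |DP t| ≤ K * (c + 1/(T - t)) := by
    intro t ht
    have hμ := hμpos t ht
    have h1 : DP t = -((c + 1/(T - t)) * (inner ℝ (x t - ψt) (w t) : ℝ)) := by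
      rw [hDPdef]
      simp only
      rw [real_inner_smul_right, inner_neg_right]
      ring
    rw [h1, abs_neg, abs_mul, abs_of_pos hμ]
    have h2 : |(inner ℝ (x t - ψt) (w t) : ℝ)| ≤ M * CC := by
      calc |(inner ℝ (x t - ψt) (w t) : ℝ)| ≤ ‖x t - ψt‖ * ‖w t‖ := abs_real_inner_le_norm _ _
        _ ≤ M * CC := mul_le_mul (heb t ht) (hwb t ht) (norm_nonneg _) hM0
    calc (c + 1/(T - t)) * |(inner ℝ (x t - ψt) (w t) : ℝ)|
        ≤ (c + 1/(T - t)) * (M*CC) := mul_le_mul_of_nonneg_left h2 hμ.le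
      _ ≤ K * (c + 1/(T - t)) := by rw [hK]; nlinarith [hμ]
  set τf : ℝ → ℝ := fun u => c*u + (Real.log T - Real.log (T - u)) with hτf
  have hτd : ∀ t ∈ Set.Ico (0:ℝ) T, HasDerivAt τf (c + 1/(T - t)) t :=
    fun t ht => tau_hasDerivAt ht.2
  have hτmono : MonotoneOn τf (Set.Ico (0:ℝ) T) :=
    monoOn_of_hasDerivAt_Ico hτd (fun t ht => (hμpos t ht).le)
  have h1mono : MonotoneOn (fun u => K * τf u - Pf u) (Set.Ico (0:ℝ) T) := by
    apply monoOn_of_hasDerivAt_Ico (g' := fun u => K*(c + 1/(T - u)) - DP u)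
    · intro u hu
      exact ((hτd u hu).const_mul K).sub (hPd u hu)
    · intro u hu
      have h1 := abs_le.mp (hDPb u hu)
      linarith [h1.1]
  have hℓne : (Vf '' Set.Ico (0:ℝ) T).Nonempty := ⟨Vf 0, Set.mem_image_of_mem _ hT0⟩
  have hℓbdd : BddBelow (Vf '' Set.Ico (0:ℝ) T) := by
    refine ⟨0, ?_⟩
    rintro v ⟨u, hu, rfl⟩
    exact hVnn u
  set ℓ : ℝ := sInf (Vf '' Set.Ico (0:ℝ) T) with hℓ
  have hℓle : ∀ t ∈ Set.Ico (0:ℝ) T, ℓ ≤ Vf t :=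
    fun t ht => csInf_le hℓbdd (Set.mem_image_of_mem _ ht)
  have hrr0 : 0 < ε/(2*(N:ℝ)) := by
    apply div_pos hε
    linarith
  clear_value w Pf Qf Vf DP DV M CC K τf ℓ κmax kb Γg
  -- main estimate: P eventually small
  have hkey : ∀ η : ℝ, 0 < η → ∃ t₁ ∈ Set.Ico (0:ℝ) T,
      ∀ t ∈ Set.Ico (0:ℝ) T, t₁ < t → Pf t < η := by
    intro η hη
    set m : ℝ := η/(2*K) with hm
    have hm0 : 0 < m := div_pos hη (by linarith)
    have hD0 : 0 < (ε/(2*(N:ℝ)))*η*m := mul_pos (mul_pos hrr0 hη) hm0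
    obtain ⟨v, ⟨t₀, ht₀, rfl⟩, hv⟩ := exists_lt_of_csInf_lt hℓne
      (show sInf (Vf '' Set.Ico (0:ℝ) T) < ℓ + (ε/(2*(N:ℝ)))*η*m by rw [← hℓ]; linarith)
    set t₁ : ℝ := max t₀ (T - T*Real.exp (-(τf t₀ + m))) with ht₁
    have hTexp : 0 < T*Real.exp (-(τf t₀ + m)) := by positivity
    have ht₁Ico : t₁ ∈ Set.Ico (0:ℝ) T := by
      constructor
      · exact le_trans ht₀.1 (le_max_left _ _)
      · apply max_lt ht₀.2
        linarith
    refine ⟨t₁, ht₁Ico, ?_⟩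
    intro t ht htgt
    by_contra hP
    push_neg at hP
    have hTt : 0 < T - t := by linarith [ht.2]
    have hτt : τf t₀ + m ≤ τf t := by
      have h1 : T - t < T*Real.exp (-(τf t₀ + m)) := by
        have h2 : T - T*Real.exp (-(τf t₀ + m)) ≤ t₁ := le_max_right _ _
        linarith
      have h3 : Real.log (T - t) ≤ Real.log (T*Real.exp (-(τf t₀ + m))) :=
        Real.log_le_log hTt h1.le
      rw [Real.log_mul (by linarith : T ≠ 0) (Real.exp_ne_zero _), Real.log_exp] at h3
      have h4 : 0 ≤ c*t := mul_nonneg hc.le ht.1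
      have hτft : τf t = c*t + (Real.log T - Real.log (T - t)) := by simp only [hτf]
      have hτft0 : τf t₀ = c*t₀ + (Real.log T - Real.log (T - t₀)) := by simp only [hτf]
      have h5 : 0 ≤ c*t₀ := mul_nonneg hc.le ht₀.1
      linarith [h3, h4, hτft]
    have ht₀t : t₀ ≤ t := le_trans (le_max_left _ _) htgt.le
    have hIccsub : Set.Icc t₀ t ⊆ Set.Ico (0:ℝ) T := by
      intro u hu
      exact ⟨le_trans ht₀.1 hu.1, lt_of_le_of_lt hu.2 ht.2⟩
    have hτcont : ContinuousOn τf (Set.Icc t₀ t) :=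
      fun u hu => ((hτd u (hIccsub hu)).continuousAt).continuousWithinAt
    have hmem : τf t - m ∈ Set.Icc (τf t₀) (τf t) := ⟨by linarith, by linarith [hm0]⟩
    obtain ⟨s, hs, hτs⟩ := intermediate_value_Icc ht₀t hτcont hmem
    have hsIco : s ∈ Set.Ico (0:ℝ) T := hIccsub hs
    have hPge : ∀ u ∈ Set.Icc s t, η/2 ≤ Pf u := by
      intro u hu
      have huIco : u ∈ Set.Ico (0:ℝ) T := ⟨le_trans hsIco.1 hu.1, lt_of_le_of_lt hu.2 ht.2⟩
      have h1 := h1mono huIco ht hu.2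
      have h2 : τf s ≤ τf u := hτmono hsIco huIco hu.1
      have hKm : K*m = η/2 := by
        rw [hm]
        field_simp
      simp only at h1
      have h9 : K*(τf t - τf u) ≤ K*m :=
        mul_le_mul_of_nonneg_left (by linarith [hτs]) hK0.le
      nlinarith [h1, h9, hKm, hP]
    have hdrop : Vf t + (ε/(2*(N:ℝ)))*η*m ≤ Vf s := by
      have hanti : AntitoneOn (fun u => Vf u + ((ε/(2*(N:ℝ)))*η) * τf u) (Set.Icc s t) := by
        apply antiOn_of_hasDerivAt_Icc (g' := fun u => DV u + ((ε/(2*(N:ℝ)))*η)*(c + 1/(T - u)))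
        · intro u hu
          have huIco : u ∈ Set.Ico (0:ℝ) T := ⟨le_trans hsIco.1 hu.1, lt_of_le_of_lt hu.2 ht.2⟩
          exact (hVd u huIco).add ((hτd u huIco).const_mul ((ε/(2*(N:ℝ)))*η))
        · intro u hu
          have huIco : u ∈ Set.Ico (0:ℝ) T := ⟨le_trans hsIco.1 hu.1, lt_of_le_of_lt hu.2 ht.2⟩
          have h1 := hDVle u huIco
          have h2 : η ≤ ‖x u - ψt‖^2 := by
            have h2a := hPge u hu
            simp only [hPfdef] at h2a
            linarith
          have hμu := hμpos u huIco
          have h3 : (c + 1/(T-u))*((ε/(2*(N:ℝ)))*η) ≤ (c + 1/(T-u))*((ε/(2*(N:ℝ)))*‖x u - ψt‖^2) :=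
            mul_le_mul_of_nonneg_left (mul_le_mul_of_nonneg_left h2 hrr0.le) hμu.le
          nlinarith [h1, h3]
      have hst : s ≤ t := hs.2
      have h5 := hanti (Set.left_mem_Icc.mpr hst) (Set.right_mem_Icc.mpr hst) hst
      simp only at h5
      rw [hτs] at h5
      nlinarith [h5]
    have h7 : ℓ ≤ Vf t := hℓle t ht
    have h8 : Vf s ≤ Vf t₀ := hVanti ht₀ hsIco hs.1
    linarith [hv]
  -- assemble the convergence statement
  have hPtend : Tendsto Pf (nhdsWithin T (Set.Ico 0 T)) (nhds 0) := by
    rw [tendsto_order]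
    constructor
    · intro b hb
      filter_upwards [eventually_mem_nhdsWithin] with u _
      have := hPnn u
      linarith
    · intro b hb
      obtain ⟨t₁, ht₁, hkey2⟩ := hkey b hb
      have h1 : ∀ᶠ u in nhdsWithin T (Set.Ico 0 T), t₁ < u :=
        eventually_nhdsWithin_of_eventually_nhds (eventually_gt_nhds ht₁.2)
      filter_upwards [h1, eventually_mem_nhdsWithin] with u hu1 hu2
      exact hkey2 u hu2 hu1
  have hnorm : Tendsto (fun u => ‖x u - ψt‖) (nhdsWithin T (Set.Ico 0 T)) (nhds 0) := by
    have h1 : Tendsto (fun u => 2 * Pf u) (nhdsWithin T (Set.Ico 0 T)) (nhds 0) := by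
      have h2 := hPtend.const_mul (2:ℝ)
      rw [mul_zero] at h2
      exact h2
    have h2 : Tendsto (fun u => Real.sqrt (2 * Pf u)) (nhdsWithin T (Set.Ico 0 T)) (nhds 0) := by
      have h3 := (Real.continuous_sqrt.tendsto 0).comp h1
      rw [Real.sqrt_zero] at h3
      exact h3
    have h4 : (fun u => Real.sqrt (2 * Pf u)) = fun u => ‖x u - ψt‖ := by
      funext u
      simp only [hPfdef]
      rw [show (2:ℝ) * (1/2*‖x u - ψt‖^2) = ‖x u - ψt‖^2 by ring,
        Real.sqrt_sq (norm_nonneg _)]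
    rw [h4] at h2
    exact h2
  show Tendsto x (nhdsWithin T (Set.Ico 0 T)) (nhds ψt)
  rw [tendsto_iff_norm_sub_tendsto_zero]
  exact hnorm
end
end

section
/- (Proposition 1, equilibria of the augmented dynamics are consensus at the NE.) Let κ > 0 and suppose ψ : Fin N → X satisfies 𝒜 ψ = 0, i.e. for every i, Function.update (0 : X) i ((F̃ ψ) i) + κ • ∑ j, L i j • ψ j = 0. Then all players' estimates coincide and equal the Nash equilibrium: ψ i = x* for every i ∈ Fin N; in particular F̃ ψ = 0 and ∑ j, L i j • ψ j = 0 for every i. -/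
noncomputable section

open Filter

private lemma piLp_sum_apply' {ι κι : Type*} (s : Finset ι) {β : κι → Type*}
    [∀ k, SeminormedAddCommGroup (β k)] (f : ι → PiLp 2 β) (k : κι) :
    (∑ j ∈ s, f j) k = ∑ j ∈ s, f j k := by
  classical
  induction s using Finset.induction with
  | empty => rfl
  | insert a s h ih => rw [Finset.sum_insert h, Finset.sum_insert h, ← ih]; rfl

/-- **Proposition 1**: any equilibrium of the augmented dynamics is a consensus at the
Nash equilibrium: all estimates coincide with `x*`, the extended pseudo-gradient vanishes,
and the Laplacian (consensus) term vanishes. -/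
theorem equilibria_are_consensus_at_NE
    {N : ℕ} (hN : 1 ≤ N) {d : Fin N → ℕ}
    (J : ∀ _ : Fin N, (PiLp 2 fun i => EuclideanSpace ℝ (Fin (d i))) → ℝ)
    (hJ : ∀ i, Differentiable ℝ (J i))
    (G : SimpleGraph (Fin N)) [DecidableRel G.Adj] (hG : G.Connected)
    (ε : ℝ) (hε : 0 < ε)
    (hmono : ∀ x y : PiLp 2 fun i => EuclideanSpace ℝ (Fin (d i)),
      (inner ℝ (x - y) (Fmap J x - Fmap J y) : ℝ) ≥ ε * ‖x - y‖ ^ 2)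
    (xstar : PiLp 2 fun i => EuclideanSpace ℝ (Fin (d i))) (hxstar : Fmap J xstar = 0)
    (κ : ℝ) (hκ : 0 < κ)
    (ψ : Fin N → PiLp 2 fun i => EuclideanSpace ℝ (Fin (d i)))
    (heq : ∀ i, (show PiLp 2 (fun i => EuclideanSpace ℝ (Fin (d i))) from
        WithLp.toLp 2 (Function.update (0 : PiLp 2 fun i => EuclideanSpace ℝ (Fin (d i))) i (Ftil J ψ i)))
      + κ • ∑ j, SimpleGraph.lapMatrix ℝ G i j • ψ j = 0) :
    (∀ i, ψ i = xstar) ∧ Ftil J ψ = 0 ∧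
      ∀ i, ∑ j, SimpleGraph.lapMatrix ℝ G i j • ψ j = 0 := by
  classical
  set Lm := SimpleGraph.lapMatrix ℝ G with hLm
  have hcol : ∀ j, ∑ i, Lm i j = 0 := by
    intro j
    have h1 := congrFun (SimpleGraph.lapMatrix_mulVec_const_eq_zero (R := ℝ) (G := G)) j
    simp only [Matrix.mulVec, dotProduct, mul_one, Pi.zero_apply] at h1
    have hsymm : ∀ a b, Lm a b = Lm b a := fun a b =>
      (SimpleGraph.isSymm_lapMatrix G (R := ℝ)).apply b a
    calc ∑ i, Lm i j = ∑ i, Lm j i := Finset.sum_congr rfl (fun i _ => hsymm i j)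
      _ = 0 := h1
  have hoff : ∀ (k : Fin N) (t : Fin (d k)) (i : Fin N), i ≠ k →
      ∑ j, Lm i j * ψ j k t = 0 := by
    intro k t i hik
    have h : Function.update (0 : PiLp 2 fun i => EuclideanSpace ℝ (Fin (d i))) i
          (Ftil J ψ i) k
        + (κ • ∑ j, Lm i j • ψ j : PiLp 2 fun i => EuclideanSpace ℝ (Fin (d i))) k = 0 :=
      congrFun (congrArg WithLp.ofLp (heq i)) k
    rw [Function.update_of_ne (Ne.symm hik), WithLp.ofLp_zero, Pi.zero_apply, zero_add] at h
    have h2 : κ * ((∑ j, Lm i j • ψ j :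
        PiLp 2 fun i => EuclideanSpace ℝ (Fin (d i))) k) t = 0 := congrFun (congrArg WithLp.ofLp h) t
    have e1 : ((∑ j, Lm i j • ψ j : PiLp 2 fun i => EuclideanSpace ℝ (Fin (d i))) k)
        = ∑ j, Lm i j • ψ j k := piLp_sum_apply' _ _ k
    have e2 : ((∑ j, Lm i j • ψ j k) : EuclideanSpace ℝ (Fin (d k))) t
        = ∑ j, Lm i j * ψ j k t := piLp_sum_apply' _ _ t
    rw [e1, e2] at h2
    exact (mul_eq_zero.mp h2).resolve_left (ne_of_gt hκ)
  have key : ∀ (k : Fin N) (t : Fin (d k)) (i : Fin N), ∑ j, Lm i j * ψ j k t = 0 := by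
    intro k t i
    rcases eq_or_ne i k with h | h
    · subst h
      have hsum : ∑ a, ∑ j, Lm a j * ψ j i t = 0 := by
        rw [Finset.sum_comm]
        refine Finset.sum_eq_zero fun j _ => ?_
        rw [← Finset.sum_mul, hcol j, zero_mul]
      rwa [Finset.sum_eq_single i (fun b _ hb => hoff i t b hb) (by simp)] at hsum
    · exact hoff k t i h
  have hconst : ∀ (k : Fin N) (t : Fin (d k)) (a b : Fin N), ψ a k t = ψ b k t := by
    intro k t a b
    have hker : Matrix.toLin' (G.lapMatrix ℝ) (fun j => ψ j k t) = 0 := by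
      rw [Matrix.toLin'_apply]
      funext i
      simpa [Matrix.mulVec, dotProduct] using key k t i
    exact (SimpleGraph.lapMatrix_mulVec_eq_zero_iff_forall_reachable (G := G)
      (x := fun j => ψ j k t)).mp (by rwa [Matrix.toLin'_apply] at hker) a b (hG.preconnected a b)
  have hpsi_eq : ∀ a b : Fin N, ψ a = ψ b := fun a b => PiLp.ext fun k => PiLp.ext fun t =>
    hconst k t a b
  have hLzero : ∀ i, ∑ j, Lm i j • ψ j
      = (0 : PiLp 2 fun i => EuclideanSpace ℝ (Fin (d i))) := by
    intro i
    refine PiLp.ext fun k => PiLp.ext fun t => ?_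
    have e1 : ((∑ j, Lm i j • ψ j : PiLp 2 fun i => EuclideanSpace ℝ (Fin (d i))) k)
        = ∑ j, Lm i j • ψ j k := piLp_sum_apply' _ _ k
    have e2 : ((∑ j, Lm i j • ψ j k) : EuclideanSpace ℝ (Fin (d k))) t
        = ∑ j, Lm i j * ψ j k t := piLp_sum_apply' _ _ t
    show ((∑ j, Lm i j • ψ j : PiLp 2 fun i => EuclideanSpace ℝ (Fin (d i))) k) t = 0
    rw [e1, e2]
    exact key k t i
  have hFtil : ∀ i, Ftil J ψ i = 0 := by
    intro i
    have h := heq i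
    rw [hLzero i, smul_zero, add_zero] at h
    have h2 : Function.update (0 : PiLp 2 fun i => EuclideanSpace ℝ (Fin (d i))) i
        (Ftil J ψ i) i = 0 := congrFun (congrArg WithLp.ofLp h) i
    rwa [Function.update_self] at h2
  set i₀ : Fin N := ⟨0, hN⟩ with hi₀
  have hF : Fmap J (ψ i₀) = 0 := by
    refine PiLp.ext fun i => ?_
    have h : gradi J i (ψ i₀) = gradi J i (ψ i) := by rw [hpsi_eq i₀ i]
    show gradi J i (ψ i₀) = 0
    rw [h]
    exact hFtil i
  have hmon := hmono (ψ i₀) xstar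
  rw [hF, hxstar, sub_zero, inner_zero_right] at hmon
  have hnorm : ψ i₀ - xstar = 0 := by
    by_contra hne
    have h1 : 0 < ‖ψ i₀ - xstar‖ := norm_pos_iff.mpr hne
    nlinarith [mul_pos hε (mul_pos h1 h1)]
  have hstar : ψ i₀ = xstar := sub_eq_zero.mp hnorm
  exact ⟨fun i => (hpsi_eq i i₀).trans hstar, PiLp.ext hFtil, hLzero⟩
end
end

section
/- (Quantitative decay rate for the prescribed-time algorithm, eq. (36) of the paper.) Let c > 0 and T > 0, and let x : ℝ → (Fin N → X) satisfy, for every t ∈ [0, T), HasDerivAt x ((c + 1/(T − t)) • (−𝒜 (x t))) t. Then there exists μ > 0, depending only on ε, ι, λ₂, κ, and N, such that for all t ∈ [0, T), ‖x t − ψ̃‖ ≤ ((T − t)/T) ^ μ * ‖x 0 − ψ̃‖ (with the L² product norm on Fin N → X). -/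
noncomputable section

open Filter

private lemma quad_pos' {A B C : ℝ} (hA : 0 < A) (hC : 0 < C) (h : B ^ 2 < A * C) :
    ∃ η : ℝ, 0 < η ∧ ∀ p b : ℝ, η * (p ^ 2 + b ^ 2) ≤ A * p ^ 2 - 2 * B * p * b + C * b ^ 2 := by
  refine ⟨(A * C - B ^ 2) / (A + C), div_pos (by linarith) (by linarith), fun p b => ?_⟩
  set η := (A * C - B ^ 2) / (A + C) with hη
  have hkey : η * (A + C) = A * C - B ^ 2 := div_mul_cancel₀ _ (by positivity)
  have hAη : 0 < A - η := by nlinarith [sq_nonneg B]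
  nlinarith [sq_nonneg ((A - η) * p - B * b), sq_nonneg (η * b), sq_nonneg b, sq_nonneg p]

private lemma arith1 {η₀ p b n : ℝ} (hη₀ : 0 < η₀) (hn : 1 ≤ n) :
    η₀ / n * (n * p ^ 2 + b ^ 2) ≤ η₀ * (p ^ 2 + b ^ 2) := by
  have hn0 : 0 < n := lt_of_lt_of_le one_pos hn
  have key : η₀ / n * n = η₀ := div_mul_cancel₀ _ hn0.ne'
  have hle : η₀ / n ≤ η₀ := div_le_self hη₀.le hn
  have hpos : 0 < η₀ / n := div_pos hη₀ hn0
  nlinarith [sq_nonneg b, sq_nonneg p]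

private lemma arith2 {ε ι κ lam₂ p b S Q : ℝ}
    (h1 : ε * p ^ 2 - (p + b) * (ι * b) - b * (ι * p) ≤ S)
    (h2 : κ * (lam₂ * b ^ 2) ≤ κ * Q) :
    ε * p ^ 2 - 2 * ι * p * b + (κ * lam₂ - ι) * b ^ 2 ≤ S + κ * Q := by nlinarith

set_option maxHeartbeats 1000000 in
private lemma Amap_strong_mono
    {N : ℕ} (hN : 1 ≤ N) {d : Fin N → ℕ}
    (J : ∀ _ : Fin N, (PiLp 2 fun i => EuclideanSpace ℝ (Fin (d i))) → ℝ)
    (G : SimpleGraph (Fin N)) [DecidableRel G.Adj]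
    (ε ι lam₂ κ : ℝ) (hε : 0 < ε) (hι : 0 < ι) (hlam₂ : 0 < lam₂)
    (hmono : ∀ x y : PiLp 2 fun i => EuclideanSpace ℝ (Fin (d i)),
      (inner ℝ (x - y) (Fmap J x - Fmap J y) : ℝ) ≥ ε * ‖x - y‖ ^ 2)
    (hFLip : ∀ x y : PiLp 2 fun i => EuclideanSpace ℝ (Fin (d i)),
      ‖Fmap J x - Fmap J y‖ ≤ ι * ‖x - y‖)
    (hFtilLip : ∀ ψ φ : PiLp 2 fun _ : Fin N => PiLp 2 fun i => EuclideanSpace ℝ (Fin (d i)),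
      ‖Ftil J ψ - Ftil J φ‖ ≤ ι * ‖ψ - φ‖)
    (hlap : ∀ v : Fin N → PiLp 2 fun i => EuclideanSpace ℝ (Fin (d i)),
      ∑ i, v i = 0 →
      ∑ i, ∑ j, SimpleGraph.lapMatrix ℝ G i j * (inner ℝ (v i) (v j) : ℝ) ≥ lam₂ * ∑ i, ‖v i‖ ^ 2)
    (xstar : PiLp 2 fun i => EuclideanSpace ℝ (Fin (d i))) (hxstar : Fmap J xstar = 0)
    (hκgain : κ > (ι ^ 2 / ε + ι) / lam₂) :
    ∃ η : ℝ, 0 < η ∧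
      ∀ ψ : PiLp 2 fun _ : Fin N => PiLp 2 fun i => EuclideanSpace ℝ (Fin (d i)),
        η * ‖ψ - (show PiLp 2 (fun _ : Fin N => PiLp 2 fun i => EuclideanSpace ℝ (Fin (d i))) from
            WithLp.toLp 2 fun _ => xstar)‖ ^ 2
          ≤ (inner ℝ (ψ - (show PiLp 2 (fun _ : Fin N => PiLp 2 fun i => EuclideanSpace ℝ (Fin (d i))) from
            WithLp.toLp 2 fun _ => xstar)) (Amap J G κ ψ) : ℝ) := by
  have hNR : (1 : ℝ) ≤ (N : ℝ) := by exact_mod_cast hN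
  have hNne : (N : ℝ) ≠ 0 := by positivity
  have hKl : ι ^ 2 / ε + ι < κ * lam₂ := (div_lt_iff₀ hlam₂).mp hκgain
  have hιε : 0 < ι ^ 2 / ε := by positivity
  have hC : 0 < κ * lam₂ - ι := by linarith
  have hBAC : ι ^ 2 < ε * (κ * lam₂ - ι) := by
    have h2 : ι ^ 2 / ε * ε = ι ^ 2 := div_mul_cancel₀ _ hε.ne'
    nlinarith
  obtain ⟨η₀, hη₀, hquad⟩ := quad_pos' hε hC hBAC
  refine ⟨η₀ / N, by positivity, fun ψ => ?_⟩
  set L := SimpleGraph.lapMatrix ℝ G with hLdef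
  have hrow : ∀ i, ∑ j, L i j = 0 := by
    intro i
    have h := congrFun (SimpleGraph.lapMatrix_mulVec_const_eq_zero (R := ℝ) (G := G)) i
    simpa [Matrix.mulVec, dotProduct] using h
  have hsymm : (L : Matrix (Fin N) (Fin N) ℝ).IsSymm := SimpleGraph.isSymm_lapMatrix ℝ G
  have hcol : ∀ j, ∑ i, L i j = 0 := by
    intro j
    calc ∑ i, L i j = ∑ i, L j i := Finset.sum_congr rfl fun i _ => (hsymm.apply j i)
    _ = 0 := hrow j
  set ψt : PiLp 2 (fun _ : Fin N => PiLp 2 fun i => EuclideanSpace ℝ (Fin (d i))) :=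
    WithLp.toLp 2 fun _ => xstar with hψt
  set e : Fin N → PiLp 2 (fun i => EuclideanSpace ℝ (Fin (d i))) := fun i => ψ i - xstar with he
  set m : PiLp 2 (fun i => EuclideanSpace ℝ (Fin (d i))) := (N : ℝ)⁻¹ • ∑ i, e i with hm
  set δ : Fin N → PiLp 2 (fun i => EuclideanSpace ℝ (Fin (d i))) := fun i => e i - m with hδ
  have hδsum : ∑ i, δ i = 0 := by
    have h1 : ∑ _i : Fin N, m = (N : ℝ) • m := by
      rw [Finset.sum_const, Finset.card_univ, Fintype.card_fin, Nat.cast_smul_eq_nsmul]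
    have : ∑ i, δ i = ∑ i, e i - ∑ _i : Fin N, m := by
      rw [hδ, Finset.sum_sub_distrib]
    rw [this, h1, hm, smul_smul, mul_inv_cancel₀ hNne, one_smul, sub_self]
  set ψh : PiLp 2 (fun _ : Fin N => PiLp 2 fun i => EuclideanSpace ℝ (Fin (d i))) :=
    WithLp.toLp 2 fun _ => xstar + m with hψh
  set δ' : PiLp 2 (fun i => EuclideanSpace ℝ (Fin (d i))) := WithLp.toLp 2 fun k => δ k k with hδ'
  set b := ‖ψ - ψh‖ with hb
  set p := ‖m‖ with hp
  have hb0 : 0 ≤ b := norm_nonneg _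
  have hp0 : 0 ≤ p := norm_nonneg _
  have hsubh : ∀ i, (ψ - ψh) i = δ i := by
    intro i
    show ψ i - ψh i = δ i
    rw [hδ, he]
    show ψ i - (xstar + m) = ψ i - xstar - m
    rw [sub_add_eq_sub_sub]
  have hb2 : b ^ 2 = ∑ i, ‖δ i‖ ^ 2 := by
    rw [hb, PiLp.norm_sq_eq_of_L2]
    exact Finset.sum_congr rfl fun i _ => by rw [hsubh i]
  have hδ'b : ‖δ'‖ ≤ b := by
    have h1 : ‖δ'‖ ^ 2 ≤ b ^ 2 := by
      rw [hb2, PiLp.norm_sq_eq_of_L2]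
      refine Finset.sum_le_sum fun k _ => ?_
      have h2 : ‖δ k‖ ^ 2 = ∑ l, ‖δ k l‖ ^ 2 := PiLp.norm_sq_eq_of_L2 _ _
      rw [h2]
      exact Finset.single_le_sum (fun l _ => sq_nonneg ‖δ k l‖) (Finset.mem_univ k)
    exact (pow_le_pow_iff_left₀ (norm_nonneg _) hb0 two_ne_zero).mp h1
  have hedecomp : ∀ i, e i = δ i + m := fun i => by rw [hδ]; exact (sub_add_cancel _ _).symm
  have hψdecomp : ∀ j, ψ j = δ j + (xstar + m) := by
    intro j
    show ψ j = (ψ j - xstar - m) + (xstar + m)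
    abel
  -- Laplacian quadratic term
  have hLψ : ∑ i, ∑ j, L i j * (inner ℝ (e i) (ψ j) : ℝ)
      = ∑ i, ∑ j, L i j * (inner ℝ (δ i) (δ j) : ℝ) := by
    have h1 : ∀ i, ∑ j, L i j * (inner ℝ (e i) (ψ j) : ℝ)
        = ∑ j, L i j * (inner ℝ (e i) (δ j) : ℝ) := by
      intro i
      have h : ∀ j, (inner ℝ (e i) (ψ j) : ℝ)
          = inner ℝ (e i) (δ j) + inner ℝ (e i) (xstar + m) := by
        intro j; rw [hψdecomp j, inner_add_right]
      simp only [h, mul_add, Finset.sum_add_distrib, ← Finset.sum_mul, hrow i, zero_mul, add_zero]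
    have h2 : ∀ j, ∑ i, L i j * (inner ℝ (e i) (δ j) : ℝ)
        = ∑ i, L i j * (inner ℝ (δ i) (δ j) : ℝ) := by
      intro j
      have h : ∀ i, (inner ℝ (e i) (δ j) : ℝ) = inner ℝ (δ i) (δ j) + inner ℝ m (δ j) := by
        intro i; rw [hedecomp i, inner_add_left]
      simp only [h, mul_add, Finset.sum_add_distrib, ← Finset.sum_mul, hcol j, zero_mul, add_zero]
    rw [Finset.sum_congr rfl fun i _ => h1 i, Finset.sum_comm,
      Finset.sum_congr rfl fun j _ => h2 j, Finset.sum_comm]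
  have hlapq : lam₂ * ∑ i, ‖δ i‖ ^ 2 ≤ ∑ i, ∑ j, L i j * (inner ℝ (δ i) (δ j) : ℝ) := hlap δ hδsum
  -- expansion of the inner ℝ product
  have hupd : ∀ (u : PiLp 2 fun i => EuclideanSpace ℝ (Fin (d i))) (i : Fin N)
      (v : EuclideanSpace ℝ (Fin (d i))),
      (inner ℝ u (show PiLp 2 (fun i => EuclideanSpace ℝ (Fin (d i))) from
        WithLp.toLp 2 (Function.update (0 : PiLp 2 fun i => EuclideanSpace ℝ (Fin (d i))) i v)) : ℝ) = inner ℝ (u i) v := by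
    intro u i v
    rw [PiLp.inner_apply]
    rw [Finset.sum_eq_single i]
    · simp
    · intro j _ hj
      simp [Function.update_of_ne hj]
    · intro h; exact absurd (Finset.mem_univ i) h
  have hexp : (inner ℝ (ψ - ψt) (Amap J G κ ψ) : ℝ)
      = (∑ i, (inner ℝ (e i i) (Ftil J ψ i) : ℝ))
        + κ * ∑ i, ∑ j, L i j * (inner ℝ (e i) (ψ j) : ℝ) := by
    rw [PiLp.inner_apply]
    have h : ∀ i, (inner ℝ ((ψ - ψt) i) (Amap J G κ ψ i) : ℝ)
        = (inner ℝ (e i i) (Ftil J ψ i) : ℝ) + κ * ∑ j, L i j * (inner ℝ (e i) (ψ j) : ℝ) := by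
      intro i
      have hei : (ψ - ψt) i = e i := rfl
      show (inner ℝ ((ψ - ψt) i)
        ((show PiLp 2 (fun i => EuclideanSpace ℝ (Fin (d i))) from
          WithLp.toLp 2 (Function.update (0 : PiLp 2 fun i => EuclideanSpace ℝ (Fin (d i))) i (Ftil J ψ i)))
          + κ • ∑ j, L i j • ψ j) : ℝ) = _
      rw [hei, inner_add_right, hupd, real_inner_smul_right, inner_sum]
      congr 2
      exact Finset.sum_congr rfl fun j _ => real_inner_smul_right _ _ _
    rw [Finset.sum_congr rfl fun i _ => h i, Finset.sum_add_distrib, ← Finset.mul_sum]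
  -- the gradient part
  set w : PiLp 2 (fun i => EuclideanSpace ℝ (Fin (d i))) := WithLp.toLp 2 fun k => e k k with hw
  have hwd : w = m + δ' := by
    ext k : 1
    show e k k = m k + δ' k
    rw [hedecomp k]
    show δ k k + m k = m k + δ k k
    rw [add_comm]
  have hwn : ‖w‖ ≤ p + b := by
    rw [hwd]
    exact (norm_add_le _ _).trans (by linarith)
  have hSsum : (∑ i, (inner ℝ (e i i) (Ftil J ψ i) : ℝ)) = inner ℝ w (Ftil J ψ) := by
    rw [PiLp.inner_apply]
  have hFh : Ftil J ψh = Fmap J (xstar + m) := rfl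
  have hS : (inner ℝ w (Ftil J ψ) : ℝ)
      = inner ℝ w (Ftil J ψ - Ftil J ψh) + (inner ℝ m (Fmap J (xstar + m)) : ℝ)
        + inner ℝ δ' (Fmap J (xstar + m)) := by
    rw [inner_sub_right, ← hFh]
    have : (inner ℝ w (Ftil J ψh) : ℝ) = inner ℝ m (Ftil J ψh) + inner ℝ δ' (Ftil J ψh) := by
      rw [hwd, inner_add_left]
    rw [hFh] at this
    rw [hFh]
    linarith [this]
  have h1 : ε * p ^ 2 ≤ (inner ℝ m (Fmap J (xstar + m)) : ℝ) := by
    have h := hmono (xstar + m) xstar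
    rw [hxstar, sub_zero, add_sub_cancel_left] at h
    exact h
  have hFnorm : ‖Fmap J (xstar + m)‖ ≤ ι * p := by
    have h := hFLip (xstar + m) xstar
    rw [hxstar, sub_zero, add_sub_cancel_left] at h
    exact h
  have h2 : |(inner ℝ δ' (Fmap J (xstar + m)) : ℝ)| ≤ b * (ι * p) := by
    refine (abs_real_inner_le_norm _ _).trans ?_
    exact mul_le_mul hδ'b hFnorm (norm_nonneg _) hb0
  have h3 : |(inner ℝ w (Ftil J ψ - Ftil J ψh) : ℝ)| ≤ (p + b) * (ι * b) := by
    refine (abs_real_inner_le_norm _ _).trans ?_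
    exact mul_le_mul hwn (hFtilLip ψ ψh) (norm_nonneg _) (by linarith)
  have hSlow : ε * p ^ 2 - (p + b) * (ι * b) - b * (ι * p)
      ≤ (inner ℝ w (Ftil J ψ) : ℝ) := by
    rw [hS]
    have h2' := (abs_le.mp h2).1
    have h3' := (abs_le.mp h3).1
    linarith
  -- norm decomposition
  have hnorm : ‖ψ - ψt‖ ^ 2 = N * p ^ 2 + b ^ 2 := by
    rw [PiLp.norm_sq_eq_of_L2]
    have hterm : ∀ i, ‖(ψ - ψt) i‖ ^ 2
        = p ^ 2 + 2 * (inner ℝ m (δ i) : ℝ) + ‖δ i‖ ^ 2 := by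
      intro i
      have h : (ψ - ψt) i = m + δ i := by
        show ψ i - xstar = m + (ψ i - xstar - m)
        abel
      rw [h, norm_add_sq_real, ← hp]
    rw [Finset.sum_congr rfl fun i _ => hterm i]
    rw [Finset.sum_add_distrib, Finset.sum_add_distrib]
    have hz : ∑ i, 2 * (inner ℝ m (δ i) : ℝ) = 0 := by
      rw [← Finset.mul_sum, ← inner_sum, hδsum, inner_zero_right, mul_zero]
    rw [hz, hb2, Finset.sum_const, Finset.card_univ, Fintype.card_fin, nsmul_eq_mul, add_zero]
  -- assemble
  have hκpos : 0 < κ := lt_trans (by positivity) hκgain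
  have hmain : ε * p ^ 2 - 2 * ι * p * b + (κ * lam₂ - ι) * b ^ 2
      ≤ (inner ℝ (ψ - ψt) (Amap J G κ ψ) : ℝ) := by
    rw [hexp, hSsum, hLψ]
    set S : ℝ := inner ℝ w (Ftil J ψ) with hSdef
    set Q : ℝ := ∑ i, ∑ j, L i j * (inner ℝ (δ i) (δ j) : ℝ) with hQdef
    have hlap2 : κ * (lam₂ * b ^ 2) ≤ κ * Q := by
      rw [hb2]
      exact mul_le_mul_of_nonneg_left hlapq hκpos.le
    exact arith2 hSlow hlap2
  have hq := hquad p b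
  have hfin : η₀ / N * ‖ψ - ψt‖ ^ 2 ≤ η₀ * (p ^ 2 + b ^ 2) := by
    rw [hnorm]
    exact arith1 hη₀ hNR
  calc η₀ / N * ‖ψ - ψt‖ ^ 2 ≤ η₀ * (p ^ 2 + b ^ 2) := hfin
    _ ≤ ε * p ^ 2 - 2 * ι * p * b + (κ * lam₂ - ι) * b ^ 2 := hq
    _ ≤ _ := hmain


set_option maxHeartbeats 1000000 in
/-- **Quantitative decay rate** for the prescribed-time algorithm (eq. (36)):
`‖x t − ψ̃‖ ≤ ((T − t)/T) ^ μ * ‖x 0 − ψ̃‖` for some `μ > 0`. -/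
theorem prescribed_time_decay_rate
    {N : ℕ} (hN : 1 ≤ N) {d : Fin N → ℕ}
    (J : ∀ _ : Fin N, (PiLp 2 fun i => EuclideanSpace ℝ (Fin (d i))) → ℝ)
    (hJ : ∀ i, Differentiable ℝ (J i))
    (G : SimpleGraph (Fin N)) [DecidableRel G.Adj] (hG : G.Connected)
    (ε ι lam₂ κ : ℝ) (hε : 0 < ε) (hι : 0 < ι) (hlam₂ : 0 < lam₂)
    (hmono : ∀ x y : PiLp 2 fun i => EuclideanSpace ℝ (Fin (d i)),
      (inner ℝ (x - y) (Fmap J x - Fmap J y) : ℝ) ≥ ε * ‖x - y‖ ^ 2)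
    (hFLip : ∀ x y : PiLp 2 fun i => EuclideanSpace ℝ (Fin (d i)),
      ‖Fmap J x - Fmap J y‖ ≤ ι * ‖x - y‖)
    (hFtilLip : ∀ ψ φ : PiLp 2 fun _ : Fin N => PiLp 2 fun i => EuclideanSpace ℝ (Fin (d i)),
      ‖Ftil J ψ - Ftil J φ‖ ≤ ι * ‖ψ - φ‖)
    (hlap : ∀ v : Fin N → PiLp 2 fun i => EuclideanSpace ℝ (Fin (d i)),
      ∑ i, v i = 0 →
      ∑ i, ∑ j, SimpleGraph.lapMatrix ℝ G i j * (inner ℝ (v i) (v j) : ℝ) ≥ lam₂ * ∑ i, ‖v i‖ ^ 2)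
    (xstar : PiLp 2 fun i => EuclideanSpace ℝ (Fin (d i))) (hxstar : Fmap J xstar = 0)
    (hκgain : κ > (ι ^ 2 / ε + ι) / lam₂)
    (c T : ℝ) (hc : 0 < c) (hT : 0 < T)
    (x : ℝ → PiLp 2 fun _ : Fin N => PiLp 2 fun i => EuclideanSpace ℝ (Fin (d i)))
    (hx : ∀ t ∈ Set.Ico (0 : ℝ) T,
      HasDerivAt x ((c + 1 / (T - t)) • (-(Amap J G κ (x t)))) t) :
    ∃ μ : ℝ, 0 < μ ∧ ∀ t ∈ Set.Ico (0 : ℝ) T,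
      ‖x t - (show PiLp 2 (fun _ : Fin N => PiLp 2 fun i => EuclideanSpace ℝ (Fin (d i))) from WithLp.toLp 2 fun _ => xstar)‖ ≤ ((T - t) / T) ^ μ * ‖x 0 - (show PiLp 2 (fun _ : Fin N => PiLp 2 fun i => EuclideanSpace ℝ (Fin (d i))) from WithLp.toLp 2 fun _ => xstar)‖ := by
  obtain ⟨η, hη, hAm⟩ := Amap_strong_mono hN J G ε ι lam₂ κ hε hι hlam₂ hmono hFLip hFtilLip
    hlap xstar hxstar hκgain
  set ψt : PiLp 2 (fun _ : Fin N => PiLp 2 fun i => EuclideanSpace ℝ (Fin (d i))) :=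
    WithLp.toLp 2 fun _ => xstar with hψt
  refine ⟨η, hη, ?_⟩
  intro t₀ ht₀
  have hTt₀ : t₀ < T := ht₀.2
  have ht₀0 : 0 ≤ t₀ := ht₀.1
  set y : ℝ → ℝ := fun t => (inner ℝ (x t - ψt) (x t - ψt) : ℝ) with hy
  have hynn : ∀ t, 0 ≤ y t := fun t => real_inner_self_nonneg
  have hysq : ∀ t, y t = ‖x t - ψt‖ ^ 2 := fun t => real_inner_self_eq_norm_sq _
  set D : ℝ → ℝ := fun t =>
    2 * ((c + 1 / (T - t)) * (inner ℝ (x t - ψt) (-(Amap J G κ (x t))) : ℝ)) with hD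
  have hyd : ∀ t ∈ Set.Ico (0:ℝ) T, HasDerivAt y (D t) t := by
    intro t ht
    have h1 := (hx t ht).sub_const ψt
    have h2 := HasDerivAt.inner (𝕜 := ℝ) h1 h1
    refine h2.congr_deriv ?_
    simp only [hD]
    have h3 : (inner ℝ ((c + 1 / (T - t)) • (-(Amap J G κ (x t)))) (x t - ψt) : ℝ)
        = inner ℝ (x t - ψt) ((c + 1 / (T - t)) • (-(Amap J G κ (x t)))) := real_inner_comm _ _
    rw [h3, real_inner_smul_right]
    ring
  have hkey : ∀ t ∈ Set.Ico (0:ℝ) T, D t ≤ -(2 * η * (1 / (T - t)) * y t) := by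
    intro t ht
    have hTt : 0 < T - t := sub_pos.mpr ht.2
    have hq0 : 0 < 1 / (T - t) := by positivity
    have h1 : η * y t ≤ (inner ℝ (x t - ψt) (Amap J G κ (x t)) : ℝ) := by
      rw [hysq]
      rw [hψt]
      exact hAm (x t)
    have hyt := hynn t
    show 2 * ((c + 1 / (T - t)) * (inner ℝ (x t - ψt) (-(Amap J G κ (x t))) : ℝ))
      ≤ -(2 * η * (1 / (T - t)) * y t)
    rw [inner_neg_right]
    set I : ℝ := (inner ℝ (x t - ψt) (Amap J G κ (x t)) : ℝ) with hI
    set q : ℝ := 1 / (T - t) with hqd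
    have hcq : 0 < c + q := by linarith
    have e1 : (c + q) * (η * y t) ≤ (c + q) * I := mul_le_mul_of_nonneg_left h1 hcq.le
    have e2 : q * (η * y t) ≤ (c + q) * (η * y t) :=
      mul_le_mul_of_nonneg_right (by linarith) (mul_nonneg hη.le hyt)
    nlinarith [e1, e2]
  set r : ℝ → ℝ := fun t => (T - t) / T with hr
  have hrpos : ∀ t, t < T → 0 < r t := fun t ht => div_pos (by linarith) hT
  have hrd : ∀ t : ℝ, HasDerivAt r (-T⁻¹) t := by
    intro t
    have h := ((hasDerivAt_id t).const_sub T).div_const T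
    simpa [neg_div, one_div] using h
  set B : ℝ → ℝ := fun t => r t ^ (2 * η) with hB
  have hBd : ∀ t, t < T → HasDerivAt B (-T⁻¹ * (2 * η) * r t ^ (2 * η - 1)) t :=
    fun t ht => (hrd t).rpow_const (Or.inl (hrpos t ht).ne')
  have hBpos : ∀ t, t < T → 0 < B t := fun t ht => Real.rpow_pos_of_pos (hrpos t ht) _
  have hBrel : ∀ t, t < T →
      -T⁻¹ * (2 * η) * r t ^ (2 * η - 1) = -(2 * η * (1 / (T - t)) * B t) := by
    intro t ht
    have hTt : 0 < T - t := sub_pos.mpr ht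
    have h1 : B t = r t ^ (2 * η - 1) * r t := by
      show r t ^ (2 * η) = _
      rw [← Real.rpow_add_one (hrpos t ht).ne' (2 * η - 1)]
      congr 1
      ring
    rw [h1]
    have h2 : r t = (T - t) / T := rfl
    rw [h2]
    field_simp
  set g : ℝ → ℝ := fun t => y t * (B t)⁻¹ with hg
  have hgd : ∀ t ∈ Set.Ico (0:ℝ) T, HasDerivAt g
      (D t * (B t)⁻¹ + y t * (-(-T⁻¹ * (2 * η) * r t ^ (2 * η - 1)) / (B t) ^ 2)) t := by
    intro t ht
    exact (hyd t ht).mul ((hBd t ht.2).inv (hBpos t ht.2).ne')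
  have hgnonpos : ∀ t ∈ Set.Ico (0:ℝ) T, deriv g t ≤ 0 := by
    intro t ht
    rw [(hgd t ht).deriv]
    have hTt : 0 < T - t := sub_pos.mpr ht.2
    have hBt := hBpos t ht.2
    have h2 : -(-T⁻¹ * (2 * η) * r t ^ (2 * η - 1)) / (B t) ^ 2
        = 2 * η * (1 / (T - t)) * (B t)⁻¹ := by
      rw [hBrel t ht.2, neg_neg, sq]
      field_simp
    rw [h2]
    have hk := hkey t ht
    have hBinv : 0 ≤ (B t)⁻¹ := (inv_pos.mpr hBt).le
    have h3 : D t * (B t)⁻¹ ≤ -(2 * η * (1 / (T - t)) * y t) * (B t)⁻¹ :=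
      mul_le_mul_of_nonneg_right hk hBinv
    nlinarith [h3]
  have hsub : Set.Icc (0:ℝ) t₀ ⊆ Set.Ico (0:ℝ) T :=
    fun s hs => ⟨hs.1, lt_of_le_of_lt hs.2 hTt₀⟩
  have hanti : AntitoneOn g (Set.Icc 0 t₀) := by
    apply antitoneOn_of_deriv_nonpos (convex_Icc 0 t₀)
    · intro s hs
      exact ((hgd s (hsub hs)).differentiableAt.continuousAt).continuousWithinAt
    · intro s hs
      rw [interior_Icc] at hs
      exact ((hgd s (hsub (Set.Ioo_subset_Icc_self hs))).differentiableAt).differentiableWithinAt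
    · intro s hs
      rw [interior_Icc] at hs
      exact hgnonpos s (hsub (Set.Ioo_subset_Icc_self hs))
  have hg0 : g t₀ ≤ g 0 :=
    hanti (Set.left_mem_Icc.mpr ht₀0) (Set.right_mem_Icc.mpr ht₀0) ht₀0
  have hB0 : B 0 = 1 := by
    show ((T - 0) / T) ^ (2 * η) = 1
    rw [sub_zero, div_self hT.ne', Real.one_rpow]
  have hgt₀ : y t₀ ≤ y 0 * B t₀ := by
    have h1 : y t₀ * (B t₀)⁻¹ ≤ y 0 := by
      have h := hg0
      show y t₀ * (B t₀)⁻¹ ≤ y 0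
      calc y t₀ * (B t₀)⁻¹ = g t₀ := rfl
      _ ≤ g 0 := hg0
      _ = y 0 * (B 0)⁻¹ := rfl
      _ = y 0 := by rw [hB0, inv_one, mul_one]
    have hBt := hBpos t₀ hTt₀
    calc y t₀ = y t₀ * (B t₀)⁻¹ * B t₀ := by field_simp
    _ ≤ y 0 * B t₀ := mul_le_mul_of_nonneg_right h1 hBt.le
  have hr0 : 0 < r t₀ := hrpos t₀ hTt₀
  have hsq2 : (r t₀ ^ η) ^ 2 = B t₀ := by
    show (r t₀ ^ η) ^ 2 = r t₀ ^ (2 * η)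
    rw [sq, ← Real.rpow_add hr0, two_mul]
  have hfinal : ‖x t₀ - ψt‖ ^ 2 ≤ (r t₀ ^ η * ‖x 0 - ψt‖) ^ 2 := by
    calc ‖x t₀ - ψt‖ ^ 2 = y t₀ := (hysq t₀).symm
    _ ≤ y 0 * B t₀ := hgt₀
    _ = (r t₀ ^ η * ‖x 0 - ψt‖) ^ 2 := by rw [mul_pow, hsq2, hysq]; ring
  have h0 : 0 ≤ r t₀ ^ η * ‖x 0 - ψt‖ :=
    mul_nonneg (Real.rpow_nonneg hr0.le _) (norm_nonneg _)
  have hle := (pow_le_pow_iff_left₀ (norm_nonneg _) h0 two_ne_zero).mp hfinal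
  have hrt : r t₀ = (T - t₀) / T := rfl
  rw [hψt] at hle
  rw [← hrt]
  exact hle
end
end

section
/- (Key step of Proposition 1: extracting the stationarity conditions from the equilibrium equation.) Let G be any simple graph on Fin N with Laplacian matrix L := SimpleGraph.lapMatrix ℝ G, let κ ≠ 0, let X := Π i, EuclideanSpace ℝ (Fin (d i)), and let w ∈ X and ψ : Fin N → X. If for every i ∈ Fin N, Function.update (0 : X) i (w i) + κ • ∑ j, L i j • ψ j = 0, then w = 0 and ∑ j, L i j • ψ j = 0 for every i. -/
private lemma piLp_sum_apply {N : ℕ} {d : Fin N → ℕ} (f : Fin N → PiLp 2 fun i => EuclideanSpace ℝ (Fin (d i))) (k : Fin N) :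
    (∑ j, f j) k = ∑ j, f j k := by
  rw [WithLp.ofLp_sum]; exact Finset.sum_apply k Finset.univ (fun j => (f j).ofLp)

/-- Key step of Proposition 1: if for every `i` the block vector with only `i`-th block
`w i`, plus `κ` times the Laplacian consensus term, vanishes, then `w = 0` and every
Laplacian consensus term vanishes. -/
theorem stationarity_from_equilibrium_equation {N : ℕ} {d : Fin N → ℕ}
    (G : SimpleGraph (Fin N)) [DecidableRel G.Adj] (κ : ℝ) (hκ : κ ≠ 0)
    (w : PiLp 2 fun i => EuclideanSpace ℝ (Fin (d i)))
    (ψ : Fin N → PiLp 2 fun i => EuclideanSpace ℝ (Fin (d i)))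
    (h : ∀ i, (show PiLp 2 (fun i => EuclideanSpace ℝ (Fin (d i))) from
        WithLp.toLp 2 (Function.update (0 : PiLp 2 fun i => EuclideanSpace ℝ (Fin (d i))) i (w i)))
      + κ • ∑ j, SimpleGraph.lapMatrix ℝ G i j • ψ j = 0) :
    w = 0 ∧ ∀ i, ∑ j, SimpleGraph.lapMatrix ℝ G i j • ψ j = 0 := by
  classical
  set L := SimpleGraph.lapMatrix ℝ G with hLdef
  have key : ∀ i k, Function.update (0 : PiLp 2 fun i => EuclideanSpace ℝ (Fin (d i))) i (w i) k
      + κ • ∑ j, L i j • ψ j k = 0 := by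
    intro i k
    have := congrArg (fun x => x k) (h i)
    simpa [PiLp.add_apply, PiLp.smul_apply, piLp_sum_apply] using this
  have hzero : ∀ i k, i ≠ k → ∑ j, L i j • ψ j k = 0 := by
    intro i k hik
    have hk := key i k
    rw [Function.update_of_ne (Ne.symm hik)] at hk
    simp only [PiLp.zero_apply, Pi.zero_apply, zero_add, smul_eq_zero] at hk
    tauto
  have rowsum : ∀ i, ∑ j, L i j = 0 := by
    intro i
    have := congrFun (SimpleGraph.lapMatrix_mulVec_const_eq_zero (R := ℝ) (G := G)) i
    simpa [Matrix.mulVec, dotProduct] using this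
  have colsum : ∀ j, ∑ i, L i j = 0 := by
    intro j
    have hsym := SimpleGraph.isSymm_lapMatrix (G := G) (R := ℝ)
    have : ∀ i, L i j = L j i := fun i => (Matrix.IsSymm.apply hsym j i)
    simp only [this]
    exact rowsum j
  have total : ∀ k, ∑ i, ∑ j, L i j • ψ j k = 0 := by
    intro k
    rw [Finset.sum_comm]
    have : ∀ j, ∑ i, L i j • ψ j k = 0 := by
      intro j
      rw [← Finset.sum_smul, colsum j, zero_smul]
    simp [this]
  have hdiag : ∀ k, ∑ j, L k j • ψ j k = 0 := by
    intro k
    have := total k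
    rwa [Finset.sum_eq_single k (fun i _ hik => hzero i k hik) (by simp)] at this
  have hS : ∀ i, ∑ j, L i j • ψ j = 0 := by
    intro i
    apply PiLp.ext; intro k
    rw [piLp_sum_apply]
    show _ = (0 : EuclideanSpace ℝ (Fin (d k)))
    by_cases hik : i = k
    · subst hik; exact hdiag i
    · exact hzero i k hik
  refine ⟨?_, hS⟩
  apply PiLp.ext; intro k
  have hk := key k k
  rw [Function.update_self] at hk
  have : (∑ j, L k j • ψ j k) = 0 := hdiag k
  rw [this, smul_zero, add_zero] at hk
  exact hk
end

section
/- (Master Lyapunov inequality, eq. (19)/(L8) of the paper: strong monotonicity of the augmented game map at the consensus NE.) Under the stated assumptions there exists μ > 0 such that for every ψ : Fin N → X, ∑ i, ⟪ψ i − x*, 𝒜 ψ i⟫ ≥ μ * ∑ i, ‖ψ i − x*‖². -/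
noncomputable section

open Filter

private lemma aux_final {ε ι B μ₀ N s t A C κ lam₂ : ℝ}
    (hN1 : 1 ≤ N)
    (hBdef : B = κ * lam₂ - ι)
    (hμ₀ : 0 < μ₀) (hεμ₀ : μ₀ < ε)
    (hkey : (ε - μ₀) * (B - μ₀) = ι ^ 2 + μ₀ ^ 2)
    (hA : A ≥ ε * s ^ 2 - t * (ι * s) - (t + s) * (ι * t))
    (hC : C ≥ κ * (lam₂ * t ^ 2)) :
    A + C ≥ μ₀ / N * (N * s ^ 2 + t ^ 2) := by
  have hN0 : (0:ℝ) < N := lt_of_lt_of_le one_pos hN1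
  have hμN : μ₀ / N * N = μ₀ := div_mul_cancel₀ μ₀ (ne_of_gt hN0)
  have hμle : μ₀ / N ≤ μ₀ := by
    rw [div_le_iff₀ hN0]
    nlinarith [hμ₀.le, hN1]
  have hposd : 0 < ε - μ₀ := by linarith
  have hstep : (ε - μ₀) * s ^ 2 - 2 * ι * s * t + (B - μ₀) * t ^ 2 ≥ 0 := by
    nlinarith [sq_nonneg ((ε - μ₀) * s - ι * t), sq_nonneg (μ₀ * t), hkey, hposd]
  have e1 : μ₀ / N * (N * s ^ 2 + t ^ 2) = μ₀ * s ^ 2 + μ₀ / N * t ^ 2 := by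
    rw [mul_add]
    congr 1
    rw [show μ₀ / N * (N * s ^ 2) = (μ₀ / N * N) * s ^ 2 from by ring, hμN]
  have e2 : μ₀ / N * t ^ 2 ≤ μ₀ * t ^ 2 := mul_le_mul_of_nonneg_right hμle (sq_nonneg t)
  have e3 : κ * (lam₂ * t ^ 2) = (B + ι) * t ^ 2 := by rw [hBdef]; ring
  rw [e1]
  nlinarith [hA, hC, hstep, e2, e3]

set_option maxHeartbeats 1000000 in

set_option maxHeartbeats 1000000 in
/-- **Master Lyapunov inequality** (eq. (19)/(L8)): the augmented game map is strongly
monotone at the consensus Nash equilibrium. -/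
theorem augmented_map_strongly_monotone_at_NE
    {N : ℕ} (hN : 1 ≤ N) {d : Fin N → ℕ}
    (J : ∀ _ : Fin N, (PiLp 2 fun i => EuclideanSpace ℝ (Fin (d i))) → ℝ)
    (hJ : ∀ i, Differentiable ℝ (J i))
    (G : SimpleGraph (Fin N)) [DecidableRel G.Adj] (hG : G.Connected)
    (ε ι lam₂ κ : ℝ) (hε : 0 < ε) (hι : 0 < ι) (hlam₂ : 0 < lam₂)
    (hmono : ∀ x y : PiLp 2 fun i => EuclideanSpace ℝ (Fin (d i)),
      (inner ℝ (x - y) (Fmap J x - Fmap J y) : ℝ) ≥ ε * ‖x - y‖ ^ 2)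
    (hFLip : ∀ x y : PiLp 2 fun i => EuclideanSpace ℝ (Fin (d i)),
      ‖Fmap J x - Fmap J y‖ ≤ ι * ‖x - y‖)
    (hFtilLip : ∀ ψ φ : PiLp 2 fun _ : Fin N => PiLp 2 fun i => EuclideanSpace ℝ (Fin (d i)),
      ‖Ftil J ψ - Ftil J φ‖ ≤ ι * ‖ψ - φ‖)
    (hlap : ∀ v : Fin N → PiLp 2 fun i => EuclideanSpace ℝ (Fin (d i)),
      ∑ i, v i = 0 →
      ∑ i, ∑ j, SimpleGraph.lapMatrix ℝ G i j * (inner ℝ (v i) (v j) : ℝ) ≥ lam₂ * ∑ i, ‖v i‖ ^ 2)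
    (xstar : PiLp 2 fun i => EuclideanSpace ℝ (Fin (d i))) (hxstar : Fmap J xstar = 0)
    (hκgain : κ > (ι ^ 2 / ε + ι) / lam₂)
    :
    ∃ μ : ℝ, 0 < μ ∧
      ∀ ψ : PiLp 2 fun _ : Fin N => PiLp 2 fun i => EuclideanSpace ℝ (Fin (d i)),
        ∑ i, (inner ℝ (ψ i - xstar) (Amap J G κ ψ i) : ℝ) ≥ μ * ∑ i, ‖ψ i - xstar‖ ^ 2 := by
  classical
  have hN0 : (0:ℝ) < N := by exact_mod_cast Nat.lt_of_lt_of_le Nat.zero_lt_one hN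
  have hklam : ι ^ 2 / ε + ι < κ * lam₂ := (div_lt_iff₀ hlam₂).mp hκgain
  set B : ℝ := κ * lam₂ - ι with hBdef
  have hιε : 0 < ι ^ 2 / ε := by positivity
  have hB0 : 0 < B := by rw [hBdef]; linarith
  have hεB : ι ^ 2 < ε * B := by
    have h1 : ι ^ 2 / ε < B := by rw [hBdef]; linarith
    have h2 := (div_lt_iff₀ hε).mp h1
    nlinarith
  have hκ0 : 0 < κ := by
    have h3 : 0 < (ι ^ 2 / ε + ι) / lam₂ := by positivity
    linarith
  have hεB0 : 0 < ε + B := by linarith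
  set μ₀ : ℝ := (ε * B - ι ^ 2) / (ε + B) with hμ₀def
  have hμ₀ : 0 < μ₀ := div_pos (by linarith) hεB0
  have hεμ₀ : μ₀ < ε := by
    rw [hμ₀def, div_lt_iff₀ hεB0]; nlinarith [sq_nonneg ε, sq_nonneg ι]
  have hkey : (ε - μ₀) * (B - μ₀) = ι ^ 2 + μ₀ ^ 2 := by
    rw [hμ₀def]; field_simp; ring
  refine ⟨μ₀ / N, div_pos hμ₀ hN0, ?_⟩
  intro ψ
  set L : Matrix (Fin N) (Fin N) ℝ := SimpleGraph.lapMatrix ℝ G with hLdef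
  -- row and column sums of the Laplacian vanish
  have hrow : ∀ i, ∑ j, L i j = 0 := by
    intro i
    have h := congrFun (SimpleGraph.lapMatrix_mulVec_const_eq_zero (R := ℝ) (G := G)) i
    simpa [Matrix.mulVec, dotProduct, hLdef] using h
  have hsym : ∀ i j, L i j = L j i := by
    intro i j
    rw [hLdef]
    exact (SimpleGraph.isSymm_lapMatrix (R := ℝ) G).apply j i
  have hcol : ∀ j, ∑ i, L i j = 0 := by
    intro j
    rw [show (∑ i, L i j) = ∑ i, L j i from Finset.sum_congr rfl fun i _ => hsym i j]
    exact hrow j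
  -- averaging decomposition
  set xbar : PiLp 2 fun i => EuclideanSpace ℝ (Fin (d i)) := (N:ℝ)⁻¹ • ∑ i, ψ i with hxbar
  set cbar : PiLp 2 fun _ : Fin N => PiLp 2 fun i => EuclideanSpace ℝ (Fin (d i)) :=
    WithLp.toLp 2 (fun _ => xbar) with hcbar
  set W : PiLp 2 fun _ : Fin N => PiLp 2 fun i => EuclideanSpace ℝ (Fin (d i)) :=
    ψ - cbar with hW
  have hWi : ∀ i, W i = ψ i - xbar := fun i => rfl
  have hsumv : ∑ i, W i = 0 := by
    have h1 : (∑ i, W i) = (∑ i, ψ i) - (N:ℝ) • xbar := by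
      rw [Finset.sum_congr rfl fun i _ => hWi i, Finset.sum_sub_distrib]
      congr 1
      rw [Finset.sum_const, Finset.card_univ, Fintype.card_fin, ← Nat.cast_smul_eq_nsmul ℝ]
    rw [h1, hxbar, smul_smul, mul_inv_cancel₀ (ne_of_gt hN0), one_smul, sub_self]
  set s : ℝ := ‖xbar - xstar‖ with hs
  set t : ℝ := ‖W‖ with ht
  have hs0 : 0 ≤ s := norm_nonneg _
  have ht0 : 0 ≤ t := norm_nonneg _
  have ht2 : t ^ 2 = ∑ i, ‖W i‖ ^ 2 := by
    rw [ht, PiLp.norm_sq_eq_of_L2]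
  set xhat : PiLp 2 fun i => EuclideanSpace ℝ (Fin (d i)) := WithLp.toLp 2 (fun i => ψ i i) with hxhat
  -- norm bounds
  have hhatbar : ‖xhat - xbar‖ ≤ t := by
    have h1 : ‖xhat - xbar‖ ^ 2 ≤ t ^ 2 := by
      rw [ht2, PiLp.norm_sq_eq_of_L2]
      apply Finset.sum_le_sum
      intro i _
      have h2 : (xhat - xbar) i = (W i) i := by
        rw [hWi i, PiLp.sub_apply, PiLp.sub_apply]
      calc ‖(xhat - xbar) i‖ ^ 2 = ‖(W i) i‖ ^ 2 := by rw [h2]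
        _ ≤ ∑ j, ‖(W i) j‖ ^ 2 :=
            Finset.single_le_sum (f := fun j => ‖(W i) j‖ ^ 2)
              (fun j _ => sq_nonneg _) (Finset.mem_univ i)
        _ = ‖W i‖ ^ 2 := (PiLp.norm_sq_eq_of_L2 _ _).symm
    nlinarith [norm_nonneg (xhat - xbar)]
  have hhatstar : ‖xhat - xstar‖ ≤ t + s := by
    have h1 := dist_triangle xhat xbar xstar
    simp only [dist_eq_norm] at h1
    linarith
  have hFtilconst : Ftil J cbar = Fmap J xbar := rfl
  have hFt : ‖Ftil J ψ - Fmap J xbar‖ ≤ ι * t := by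
    rw [ht, hW, ← hFtilconst]
    exact hFtilLip ψ cbar
  have hFx : ‖Fmap J xbar‖ ≤ ι * s := by
    have h1 := hFLip xbar xstar
    rwa [hxstar, sub_zero, ← hs] at h1
  -- the gradient part
  have hinner1 : (inner ℝ (xbar - xstar) (Fmap J xbar) : ℝ) ≥ ε * s ^ 2 := by
    have h1 := hmono xbar xstar
    rwa [hxstar, sub_zero, ← hs] at h1
  have hinner2 : (inner ℝ (xhat - xbar) (Fmap J xbar) : ℝ) ≥ -(t * (ι * s)) := by
    have h1 := abs_real_inner_le_norm (xhat - xbar) (Fmap J xbar)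
    have h2 : ‖xhat - xbar‖ * ‖Fmap J xbar‖ ≤ t * (ι * s) :=
      mul_le_mul hhatbar hFx (norm_nonneg _) ht0
    have h3 := neg_abs_le (inner ℝ (xhat - xbar) (Fmap J xbar) : ℝ)
    linarith
  have hinner3 : (inner ℝ (xhat - xstar) (Ftil J ψ - Fmap J xbar) : ℝ) ≥ -((t + s) * (ι * t)) := by
    have h1 := abs_real_inner_le_norm (xhat - xstar) (Ftil J ψ - Fmap J xbar)
    have h2 : ‖xhat - xstar‖ * ‖Ftil J ψ - Fmap J xbar‖ ≤ (t + s) * (ι * t) :=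
      mul_le_mul hhatstar hFt (norm_nonneg _) (by linarith)
    have h3 := neg_abs_le (inner ℝ (xhat - xstar) (Ftil J ψ - Fmap J xbar) : ℝ)
    linarith
  have hGTbound : (inner ℝ (xhat - xstar) (Ftil J ψ) : ℝ)
      ≥ ε * s ^ 2 - t * (ι * s) - (t + s) * (ι * t) := by
    have hsplit : (inner ℝ (xhat - xstar) (Ftil J ψ) : ℝ)
        = inner ℝ (xbar - xstar) (Fmap J xbar) + inner ℝ (xhat - xbar) (Fmap J xbar)
          + inner ℝ (xhat - xstar) (Ftil J ψ - Fmap J xbar) := by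
      have h1 : (inner ℝ (xhat - xstar) (Fmap J xbar) : ℝ)
          = inner ℝ (xbar - xstar) (Fmap J xbar) + inner ℝ (xhat - xbar) (Fmap J xbar) := by
        rw [← inner_add_left]
        congr 1
        abel
      have h2 : (inner ℝ (xhat - xstar) (Ftil J ψ - Fmap J xbar) : ℝ)
          = inner ℝ (xhat - xstar) (Ftil J ψ) - inner ℝ (xhat - xstar) (Fmap J xbar) :=
        inner_sub_right _ _ _
      linarith
    rw [hsplit]
    linarith
  -- block structure of the inner products against `Amap`
  have hAmap : ∀ i, (inner ℝ (ψ i - xstar) (Amap J G κ ψ i) : ℝ)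
      = (inner ℝ ((ψ i - xstar) i) (Ftil J ψ i) : ℝ)
        + κ * ∑ j, L i j * (inner ℝ (ψ i - xstar) (ψ j) : ℝ) := by
    intro i
    show (inner ℝ (ψ i - xstar)
        ((show PiLp 2 (fun i => EuclideanSpace ℝ (Fin (d i))) from
          WithLp.toLp 2 (Function.update (0 : PiLp 2 fun i => EuclideanSpace ℝ (Fin (d i))) i (Ftil J ψ i)))
          + κ • ∑ j, L i j • ψ j) : ℝ) = _
    rw [inner_add_right, real_inner_smul_right]
    congr 1
    · rw [PiLp.inner_apply, Finset.sum_eq_single i]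
      · simp only [Function.update_self]
      · intro j _ hj
        simp only [Function.update_of_ne hj, PiLp.zero_apply, inner_zero_right]
      · intro h
        exact absurd (Finset.mem_univ i) h
    · rw [inner_sum]
      congr 1
      apply Finset.sum_congr rfl
      intro j _
      rw [real_inner_smul_right]
  have hGT : ∑ i, (inner ℝ ((ψ i - xstar) i) (Ftil J ψ i) : ℝ)
      = (inner ℝ (xhat - xstar) (Ftil J ψ) : ℝ) := by
    rw [PiLp.inner_apply]
    apply Finset.sum_congr rfl
    intro i _
    congr 1
  -- the Laplacian part
  have hLT : ∑ i, ∑ j, L i j * (inner ℝ (ψ i - xstar) (ψ j) : ℝ)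
      = ∑ i, ∑ j, L i j * (inner ℝ (W i) (W j) : ℝ) := by
    have hexp : ∀ i j, (inner ℝ (ψ i - xstar) (ψ j) : ℝ)
        = inner ℝ (W i) (W j) + inner ℝ (xbar - xstar) (W j) + inner ℝ (ψ i - xstar) xbar := by
      intro i j
      simp only [hWi, inner_sub_left, inner_sub_right]
      ring
    have hz1' : ∑ i, ∑ j, L i j * (inner ℝ (ψ i - xstar) xbar : ℝ) = 0 := by
      apply Finset.sum_eq_zero
      intro i _
      rw [← Finset.sum_mul, hrow i, zero_mul]
    have hz2 : ∑ i, ∑ j, L i j * (inner ℝ (xbar - xstar) (W j) : ℝ) = 0 := by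
      rw [Finset.sum_comm]
      apply Finset.sum_eq_zero
      intro j _
      rw [← Finset.sum_mul, hcol j, zero_mul]
    calc ∑ i, ∑ j, L i j * (inner ℝ (ψ i - xstar) (ψ j) : ℝ)
        = ∑ i, ∑ j, (L i j * (inner ℝ (W i) (W j) : ℝ)
            + L i j * (inner ℝ (xbar - xstar) (W j) : ℝ)
            + L i j * (inner ℝ (ψ i - xstar) xbar : ℝ)) := by
          apply Finset.sum_congr rfl; intro i _
          apply Finset.sum_congr rfl; intro j _
          rw [hexp i j]; ring
      _ = (∑ i, ∑ j, L i j * (inner ℝ (W i) (W j) : ℝ))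
            + (∑ i, ∑ j, L i j * (inner ℝ (xbar - xstar) (W j) : ℝ))
            + (∑ i, ∑ j, L i j * (inner ℝ (ψ i - xstar) xbar : ℝ)) := by
          simp [Finset.sum_add_distrib]
      _ = ∑ i, ∑ j, L i j * (inner ℝ (W i) (W j) : ℝ) := by
          rw [hz2, hz1', add_zero, add_zero]
  have hLbound : ∑ i, ∑ j, L i j * (inner ℝ (W i) (W j) : ℝ) ≥ lam₂ * t ^ 2 := by
    rw [ht2]
    exact hlap W hsumv
  -- right-hand side
  have hRHS : ∑ i, ‖ψ i - xstar‖ ^ 2 = N * s ^ 2 + t ^ 2 := by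
    have h1 : ∀ i, ‖ψ i - xstar‖ ^ 2
        = ‖W i‖ ^ 2 + 2 * (inner ℝ (W i) (xbar - xstar) : ℝ) + s ^ 2 := by
      intro i
      have h2 : ψ i - xstar = W i + (xbar - xstar) := by rw [hWi i]; abel
      rw [h2, hs, norm_add_sq_real]
    rw [Finset.sum_congr rfl fun i _ => h1 i, Finset.sum_add_distrib, Finset.sum_add_distrib]
    have h3 : ∑ i, 2 * (inner ℝ (W i) (xbar - xstar) : ℝ) = 0 := by
      rw [← Finset.mul_sum, ← sum_inner, hsumv, inner_zero_left, mul_zero]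
    rw [h3, add_zero, ht2, Finset.sum_const, Finset.card_univ, Fintype.card_fin,
      nsmul_eq_mul]
    ring
  -- assembling everything
  have hmain : ∑ i, (inner ℝ (ψ i - xstar) (Amap J G κ ψ i) : ℝ)
      = (inner ℝ (xhat - xstar) (Ftil J ψ) : ℝ)
        + κ * ∑ i, ∑ j, L i j * (inner ℝ (W i) (W j) : ℝ) := by
    rw [Finset.sum_congr rfl fun i _ => hAmap i, Finset.sum_add_distrib, hGT,
      ← Finset.mul_sum, hLT]
  rw [hmain, hRHS]
  have hL2 : κ * (∑ i, ∑ j, L i j * (inner ℝ (W i) (W j) : ℝ)) ≥ κ * (lam₂ * t ^ 2) :=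
    mul_le_mul_of_nonneg_left hLbound hκ0.le
  exact aux_final (by exact_mod_cast hN) hBdef hμ₀ hεμ₀ hkey hGTbound hL2
end
end
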